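/- arXiv:2006.03399 — 7 statements merged into one kernel-verified Lean document; each statement's English description precedes it below -/
import Mathlib

section
/- Consider jobs 1,...,n with positive processing times p_j and due dates d_1 ≤ ... ≤ d_n (EDD order). The identity sequence (jobs in EDD order) minimizes the maximum lateness max_j (C_j − d_j) over all permutations of the jobs. -/
/-- EDD optimality. If due dates are nondecreasing (`Monotone d`),
then the identity sequence minimizes the maximum lateness `max_j (C_j - d_j)`
over all permutations. -/
theorem stmt2 {n : ℕ} (p : Fin n → ℕ) (hp : ∀ j, 0 < p j) (d : Fin n → ℤ)
    (hd : Monotone d) (hne : (Finset.univ : Finset (Fin n)).Nonempty)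
    (σ : Equiv.Perm (Fin n)) :
    (Finset.univ.sup' hne fun i : Fin n =>
        ((∑ k ∈ Finset.Iic i, p k : ℕ) : ℤ) - d i) ≤
      Finset.univ.sup' hne fun i : Fin n =>
        ((∑ k ∈ Finset.Iic i, p (σ k) : ℕ) : ℤ) - d (σ i) := by
  apply Finset.sup'_le
  intro i _
  set T : Finset (Fin n) := Finset.univ.filter (fun k => σ k ≤ i) with hT
  have hTne : T.Nonempty := ⟨σ.symm i, by simp [hT]⟩
  set m := T.max' hTne with hm
  have hmT : m ∈ T := T.max'_mem hTne
  have hσm : σ m ≤ i := by simpa [hT] using hmT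
  have hsub : T ⊆ Finset.Iic m := fun k hk => Finset.mem_Iic.2 (T.le_max' k hk)
  have himg : T.image σ = Finset.Iic i := by
    ext j
    simp only [Finset.mem_image, Finset.mem_Iic, hT, Finset.mem_filter,
      Finset.mem_univ, true_and]
    constructor
    · rintro ⟨k, hk, rfl⟩; exact hk
    · intro hj; exact ⟨σ.symm j, by simpa using hj, by simp⟩
  have hsum : ∑ k ∈ Finset.Iic i, p k = ∑ k ∈ T, p (σ k) := by
    rw [← himg, Finset.sum_image (fun a _ b _ h => σ.injective h)]
  have hsum2 : ∑ k ∈ T, p (σ k) ≤ ∑ k ∈ Finset.Iic m, p (σ k) :=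
    Finset.sum_le_sum_of_subset hsub
  calc ((∑ k ∈ Finset.Iic i, p k : ℕ) : ℤ) - d i
      ≤ ((∑ k ∈ Finset.Iic m, p (σ k) : ℕ) : ℤ) - d (σ m) := by
        have := hd hσm
        have : ((∑ k ∈ Finset.Iic i, p k : ℕ) : ℤ) ≤
            ((∑ k ∈ Finset.Iic m, p (σ k) : ℕ) : ℤ) := by
          exact_mod_cast hsum ▸ hsum2
        omega
    _ ≤ _ := Finset.le_sup'
        (f := fun j : Fin n => ((∑ k ∈ Finset.Iic j, p (σ k) : ℕ) : ℤ) - d (σ j))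
        (Finset.mem_univ m)
end

section
/- In the reduction of Theorem 1 (from Even-Odd-Partition to 1|er|ΣC_j): if a sequence σ of the 2m+2 constructed jobs is feasible (renting-period length at most K^r = p_{2m+2} + mB² + B) and has total completion time at most 2(C+D)+1, then job 2m+2 (the big r-job with processing time C+D+1) is scheduled last in σ. -/
/-- completion time of job `j` under permutation `σ` (σ maps positions to jobs). -/
def Cjob {N : ℕ} (p : Fin N → ℕ) (σ : Equiv.Perm (Fin N)) (j : Fin N) : ℕ :=
  ∑ i ∈ Finset.Iic (σ.symm j), p (σ i)

/-- `D = Σ_{j ≤ 2m} p_j = 2mB² + 2B` in the Even-Odd-Partition reduction. -/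
def DEOP (m B : ℕ) : ℕ := 2*m*B^2 + 2*B

/-- `C = Σ_{k=1}^m (m+1-k)(p_{2k-1}+p_{2k}) + (mB²+B)(m+1)` (0-indexed pairs). -/
def CEOP (m B : ℕ) (a : Fin (2*m) → ℕ) : ℕ :=
  (∑ k : Fin m, (m - (k : ℕ)) *
      ((B^2 + a ⟨2*(k : ℕ), by have := k.isLt; omega⟩) +
       (B^2 + a ⟨2*(k : ℕ)+1, by have := k.isLt; omega⟩))) +
    (m*B^2 + B)*(m+1)

/-- processing times of the reduction instance: jobs `0..2m-1` have `p = B² + a_j`,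
job `2m` (the zero-length r-job, "job 2m+1" in the paper) has `p = 0`, and
job `2m+1` (the big r-job, "job 2m+2" in the paper) has `p = C + D + 1`. -/
def pEOP (m B : ℕ) (a : Fin (2*m) → ℕ) : Fin (2*m+2) → ℕ := fun j =>
  if h : (j : ℕ) < 2*m then B^2 + a ⟨j, h⟩
  else if (j : ℕ) = 2*m then 0
  else CEOP m B a + DEOP m B + 1

/-- the zero-length r-job. -/
def zJob (m : ℕ) : Fin (2*m+2) := ⟨2*m, by omega⟩

/-- the big r-job. -/
def bJob (m : ℕ) : Fin (2*m+2) := ⟨2*m+1, by omega⟩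

/-- feasibility: the renting period (from the start of the first r-job to the
completion of the last r-job) is at most `K^r = p_{2m+2} + mB² + B`. -/
def feasEOP (m B : ℕ) (a : Fin (2*m) → ℕ) (σ : Equiv.Perm (Fin (2*m+2))) : Prop :=
  max ((Cjob (pEOP m B a) σ (zJob m) : ℤ)) ((Cjob (pEOP m B a) σ (bJob m) : ℤ)) -
      min ((Cjob (pEOP m B a) σ (zJob m) : ℤ) - pEOP m B a (zJob m))
        ((Cjob (pEOP m B a) σ (bJob m) : ℤ) - pEOP m B a (bJob m)) ≤
    (pEOP m B a (bJob m) : ℤ) + m*B^2 + B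

/-- total completion time. -/
def TCEOP (m B : ℕ) (a : Fin (2*m) → ℕ) (σ : Equiv.Perm (Fin (2*m+2))) : ℕ :=
  ∑ j : Fin (2*m+2), Cjob (pEOP m B a) σ j

/-- in the Even-Odd-Partition reduction, any feasible sequence with
total completion time at most `2(C+D)+1` schedules the big r-job last. -/
theorem stmt3 (m B : ℕ) (hm : 0 < m) (a : Fin (2*m) → ℕ) (ha : ∀ k, 0 < a k)
    (hmono : StrictMono a) (hsum : ∑ k, a k = 2*B) (hB : 2*m*(m+1) ≤ B + 2)
    (σ : Equiv.Perm (Fin (2*m+2)))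
    (hfeas : feasEOP m B a σ)
    (hTC : TCEOP m B a σ ≤ 2*(CEOP m B a + DEOP m B) + 1) :
    σ ⟨2*m+1, by omega⟩ = bJob m := by
  by_contra hne
  set p := pEOP m B a with hp
  set L : Fin (2*m+2) := ⟨2*m+1, by omega⟩ with hL
  have hpb : p (bJob m) = CEOP m B a + DEOP m B + 1 := by
    simp [hp, pEOP, bJob]
  have h1 : p (bJob m) ≤ Cjob p σ (bJob m) := by
    have hmem : σ.symm (bJob m) ∈ Finset.Iic (σ.symm (bJob m)) := Finset.mem_Iic.mpr le_rfl
    calc p (bJob m) = p (σ (σ.symm (bJob m))) := by rw [Equiv.apply_symm_apply]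
    _ ≤ _ := Finset.single_le_sum (f := fun i => p (σ i)) (fun i _ => Nat.zero_le _) hmem
  have h2 : p (bJob m) ≤ Cjob p σ (σ L) := by
    have hIic : Finset.Iic (σ.symm (σ L)) = Finset.univ := by
      rw [Equiv.symm_apply_apply]
      ext x
      simp only [Finset.mem_Iic, Finset.mem_univ, iff_true, Fin.le_def, hL]
      have := x.isLt; omega
    unfold Cjob
    rw [hIic, Equiv.sum_comp σ p]
    exact Finset.single_le_sum (fun i _ => Nat.zero_le _) (Finset.mem_univ _)
  have hne' : bJob m ≠ σ L := fun h => hne h.symm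
  have h3 : Cjob p σ (bJob m) + Cjob p σ (σ L) ≤ TCEOP m B a σ := by
    have hsub : ({bJob m, σ L} : Finset (Fin (2*m+2))) ⊆ Finset.univ := Finset.subset_univ _
    have := Finset.sum_le_sum_of_subset (f := fun j => Cjob p σ j) hsub
    rwa [Finset.sum_pair hne'] at this
  omega
end

section
/- In the reduction of Theorem 1, in any feasible sequence with total completion time at most 2(C+D)+1, exactly m of the jobs 1,...,2m are scheduled between job 2m+1 and job 2m+2. -/
lemma sum_pair_aux (f : ℕ → ℕ) : ∀ n, ∑ j ∈ Finset.range (2*n), f j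
    = ∑ k ∈ Finset.range n, (f (2*k) + f (2*k+1)) := by
  intro n
  induction n with
  | zero => simp
  | succ n ih =>
    rw [show 2*(n+1) = 2*n+1+1 by ring, Finset.sum_range_succ, Finset.sum_range_succ,
      Finset.sum_range_succ, ih]
    ring

lemma gauss_aux (n : ℕ) : (∑ k ∈ Finset.range n, (k+1)) * 2 = n * (n+1) := by
  have h1 : ∑ k ∈ Finset.range (n+1), k = ∑ k ∈ Finset.range n, (k+1) + 0 :=
    Finset.sum_range_succ' id n
  have h2 := Finset.sum_range_id_mul_two (n+1)
  simp only [add_zero] at h1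
  rw [← h1, h2]; simp [Nat.mul_comm]

lemma sum_split_aux {M : ℕ} (g : Fin (2*M+2) → ℕ) :
    ∑ j, g j = (∑ k : Fin (2*M), g ⟨(k:ℕ), by have := k.isLt; omega⟩)
      + g (zJob M) + g (bJob M) := by
  rw [Fin.sum_univ_castSucc, Fin.sum_univ_castSucc]
  have h1 : Fin.last (2*M+1) = bJob M := by ext; simp [bJob]
  have h2 : (Fin.last (2*M)).castSucc = zJob M := by ext; simp [zJob]
  rw [h1, h2]
  congr 1

lemma final_contra_aux (m B : ℕ) (hm : 0 < m) (hB : 2*m*(m+1) ≤ B+2)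
    (h6 : (2*m*m + 2*m + 1) * B^2 + (2*B + 2*m*m + m)
        ≤ m*(m+1)*B^2 + 2*m*B + (m*B^2 + B)*(m+1) + 2*m) : False := by
  have hBB : (2*m*(m+1))*B ≤ (B+2)*B := Nat.mul_le_mul_right _ hB
  have hmB : B ≤ m*B := Nat.le_mul_of_pos_left B hm
  have hm2 : m ≤ m*m := Nat.le_mul_of_pos_left m hm
  have hmmB : m*B ≤ m*m*B := Nat.mul_le_mul_right _ hm2
  nlinarith [h6, hBB, hmB, hm2, hmmB, hm]

lemma feas_contra_aux (m B : ℕ) (hm : 0 < m)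
    (h6 : (m+1)*(B^2+1) ≤ m*B^2+B) : False := by
  have hBB : B ≤ B^2 := Nat.le_self_pow (by norm_num) B
  linarith [h6, hBB]
set_option maxHeartbeats 2000000 in
/-- in the Even-Odd-Partition reduction, any feasible sequence with
total completion time at most `2(C+D)+1` schedules exactly `m` of the jobs
`1,…,2m` strictly between the zero-length r-job and the big r-job. -/
theorem stmt5 (m B : ℕ) (hm : 0 < m) (a : Fin (2*m) → ℕ) (ha : ∀ k, 0 < a k)
    (hmono : StrictMono a) (hsum : ∑ k, a k = 2*B) (hB : 2*m*(m+1) ≤ B + 2)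
    (σ : Equiv.Perm (Fin (2*m+2)))
    (hfeas : feasEOP m B a σ)
    (hTC : TCEOP m B a σ ≤ 2*(CEOP m B a + DEOP m B) + 1) :
    (Finset.univ.filter fun j : Fin (2*m+2) =>
        (j : ℕ) < 2*m ∧ σ.symm (zJob m) < σ.symm j ∧ σ.symm j < σ.symm (bJob m)).card
      = m := by
  classical
  set p := pEOP m B a with hp
  have hane : zJob m ≠ bJob m := by
    intro h
    have := congrArg Fin.val h
    simp only [zJob, bJob] at this
    omega
  have hpz : p (zJob m) = 0 := by simp [hp, pEOP, zJob]
  have hpb : p (bJob m) = CEOP m B a + DEOP m B + 1 := by simp [hp, pEOP, bJob]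
  have hpval : ∀ j : Fin (2*m+2), ∀ hj : (j : ℕ) < 2*m, p j = B^2 + a ⟨j, hj⟩ :=
    fun j hj => dif_pos hj
  -- the coefficient function
  set c : Fin (2*m+2) → ℕ := fun j => 2*m+1 - (σ.symm j : ℕ) with hc
  have hDsum : (∑ k : Fin (2*m), (B^2 + a k)) = DEOP m B := by
    rw [Finset.sum_add_distrib, Finset.sum_const, Finset.card_univ, Fintype.card_fin, hsum]
    simp [DEOP, smul_eq_mul]
  have hordsum : (∑ k : Fin (2*m), p ⟨(k:ℕ), by have := k.isLt; omega⟩) = DEOP m B := by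
    rw [← hDsum]
    refine Finset.sum_congr rfl fun k _ => ?_
    rw [hpval _ k.isLt]
  have hsump : ∑ j, p j = CEOP m B a + 2*(DEOP m B) + 1 := by
    rw [sum_split_aux p, hpz, hpb, hordsum]
    omega
  set SC := ∑ j : Fin (2*m+2), c j * p j with hSCdef
  have hTCeq : TCEOP m B a σ = SC + ∑ j, p j := by
    have e1 : TCEOP m B a σ = ∑ k : Fin (2*m+2), ∑ i ∈ Finset.Iic k, p (σ i) := by
      show (∑ j : Fin (2*m+2), Cjob p σ j) = _
      rw [← Equiv.sum_comp σ (fun j => Cjob p σ j)]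
      exact Finset.sum_congr rfl fun k _ => by simp [Cjob]
    have e2 : (∑ k : Fin (2*m+2), ∑ i ∈ Finset.Iic k, p (σ i))
        = ∑ i : Fin (2*m+2), ∑ _k ∈ Finset.Ici i, p (σ i) :=
      Finset.sum_comm' (fun x y => by simp)
    have e3 : (∑ i : Fin (2*m+2), ∑ _k ∈ Finset.Ici i, p (σ i))
        = (∑ i : Fin (2*m+2), (2*m+1 - (i:ℕ)) * p (σ i)) + ∑ i : Fin (2*m+2), p (σ i) := by
      rw [← Finset.sum_add_distrib]
      refine Finset.sum_congr rfl fun i _ => ?_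
      rw [Finset.sum_const, smul_eq_mul, Fin.card_Ici]
      have h1 : (i:ℕ) ≤ 2*m+1 := by have := i.isLt; omega
      have h4 : 2*m+2 - (i:ℕ) = (2*m+1 - (i:ℕ)) + 1 := by omega
      rw [h4, add_mul, one_mul]
    have e4 : (∑ i : Fin (2*m+2), (2*m+1 - (i:ℕ)) * p (σ i)) = SC := by
      rw [hSCdef, ← Equiv.sum_comp σ (fun j => c j * p j)]
      exact Finset.sum_congr rfl fun i _ => by simp [hc]
    have e5 : (∑ i : Fin (2*m+2), p (σ i)) = ∑ j, p j := Equiv.sum_comp σ p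
    rw [e1, e2, e3, e4, e5]
  have hSCle : SC ≤ CEOP m B a := by
    rw [hTCeq, hsump] at hTC
    omega
  -- the big job is last
  have hble : (σ.symm (bJob m) : ℕ) ≤ 2*m+1 := by have := (σ.symm (bJob m)).isLt; omega
  have hblast : (σ.symm (bJob m) : ℕ) = 2*m+1 := by
    by_contra hne
    have h1 : 1 ≤ c (bJob m) := by simp only [hc]; omega
    have h2 : c (bJob m) * p (bJob m) ≤ SC := by
      rw [hSCdef]
      exact Finset.single_le_sum (f := fun j => c j * p j)
        (fun i _ => Nat.zero_le _) (Finset.mem_univ (bJob m))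
    have h3 : p (bJob m) ≤ c (bJob m) * p (bJob m) := Nat.le_mul_of_pos_left _ (by omega)
    have h4 := le_trans h3 h2
    rw [hpb] at h4
    omega
  set s := σ.symm (zJob m) with hsdef
  have hsne : s ≠ σ.symm (bJob m) := fun h => hane (σ.symm.injective h)
  have hsle : (s:ℕ) ≤ 2*m := by
    have h1 := s.isLt
    have h2 : (s:ℕ) ≠ 2*m+1 := fun h => hsne (Fin.val_injective (h.trans hblast.symm))
    omega
  -- the count equals 2m - s
  have hcard : (Finset.univ.filter fun j : Fin (2*m+2) =>
        (j : ℕ) < 2*m ∧ s < σ.symm j ∧ σ.symm j < σ.symm (bJob m)).card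
      = 2*m - (s:ℕ) := by
    have hbij : (Finset.univ.filter fun j : Fin (2*m+2) =>
          (j : ℕ) < 2*m ∧ s < σ.symm j ∧ σ.symm j < σ.symm (bJob m)).card
        = (Finset.Ioo s (σ.symm (bJob m))).card := by
      apply Finset.card_bij (fun j _ => σ.symm j)
      · intro j hj
        simp only [Finset.mem_filter] at hj
        exact Finset.mem_Ioo.mpr ⟨hj.2.2.1, hj.2.2.2⟩
      · intro j₁ _ j₂ _ h
        exact σ.symm.injective h
      · intro i hi
        rw [Finset.mem_Ioo] at hi
        refine ⟨σ i, ?_, by simp⟩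
        simp only [Finset.mem_filter, Finset.mem_univ, true_and, Equiv.symm_apply_apply]
        refine ⟨?_, hi.1, hi.2⟩
        have hz : σ i ≠ zJob m := by
          intro h
          have : i = s := by rw [hsdef, ← h, Equiv.symm_apply_apply]
          rw [this] at hi
          exact lt_irrefl _ hi.1
        have hb2 : σ i ≠ bJob m := by
          intro h
          have : i = σ.symm (bJob m) := by rw [← h, Equiv.symm_apply_apply]
          rw [this] at hi
          exact lt_irrefl _ hi.2
        have h1 : ((σ i : Fin (2*m+2)) : ℕ) < 2*m+2 := (σ i).isLt
        have h2 : ((σ i : Fin (2*m+2)) : ℕ) ≠ 2*m := fun h => hz (Fin.val_injective h)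
        have h3 : ((σ i : Fin (2*m+2)) : ℕ) ≠ 2*m+1 := fun h => hb2 (Fin.val_injective h)
        omega
    rw [hbij, Fin.card_Ioo, hblast]
    omega
  -- feasibility gives a bound on the jobs between the two r-jobs
  have hsltL : s < σ.symm (bJob m) := by
    rw [Fin.lt_def, hblast]
    omega
  have hIicL : Finset.Iic (σ.symm (bJob m)) = Finset.univ := by
    ext i
    simp only [Finset.mem_Iic, Finset.mem_univ, iff_true, Fin.le_def, hblast]
    have := i.isLt; omega
  have hunion : Finset.Iic (σ.symm (bJob m)) = Finset.Iic s ∪ Finset.Ioc s (σ.symm (bJob m)) := by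
    ext i
    simp only [Finset.mem_union, Finset.mem_Iic, Finset.mem_Ioc, Fin.le_def, Fin.lt_def, hblast]
    have := i.isLt; omega
  have hdisj : Disjoint (Finset.Iic s) (Finset.Ioc s (σ.symm (bJob m))) := by
    rw [Finset.disjoint_left]
    intro i hi hi2
    rw [Finset.mem_Iic] at hi
    rw [Finset.mem_Ioc] at hi2
    exact absurd hi (not_le.mpr hi2.1)
  have hCbsplit : Cjob p σ (bJob m)
      = Cjob p σ (zJob m) + ∑ i ∈ Finset.Ioc s (σ.symm (bJob m)), p (σ i) := by
    show (∑ i ∈ Finset.Iic (σ.symm (bJob m)), p (σ i))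
      = (∑ i ∈ Finset.Iic (σ.symm (zJob m)), p (σ i)) + _
    rw [hunion, Finset.sum_union hdisj]
  have hIoc : (∑ i ∈ Finset.Ioc s (σ.symm (bJob m)), p (σ i))
      = p (bJob m) + ∑ i ∈ Finset.Ioo s (σ.symm (bJob m)), p (σ i) := by
    rw [← Finset.Ioo_insert_right hsltL, Finset.sum_insert Finset.right_notMem_Ioo]
    congr 1
    rw [Equiv.apply_symm_apply]
  have h3 : (↑(Cjob p σ (bJob m)) : ℤ) - (↑(Cjob p σ (zJob m)) - (p (zJob m) : ℤ))
      ≤ ↑(p (bJob m)) + (m:ℤ)*(B:ℤ)^2 + (B:ℤ) := by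
    have h1 := le_max_right (↑(Cjob p σ (zJob m)) : ℤ) (↑(Cjob p σ (bJob m)) : ℤ)
    have h2 := min_le_left (↑(Cjob p σ (zJob m)) - (p (zJob m):ℤ))
      (↑(Cjob p σ (bJob m)) - (p (bJob m):ℤ))
    unfold feasEOP at hfeas
    rw [← hp] at hfeas
    linarith
  have hQle : (∑ i ∈ Finset.Ioo s (σ.symm (bJob m)), p (σ i)) ≤ m*B^2 + B := by
    have h4 : (Cjob p σ (bJob m) : ℤ)
        = (Cjob p σ (zJob m) : ℤ) + (p (bJob m) : ℤ)
          + ↑(∑ i ∈ Finset.Ioo s (σ.symm (bJob m)), p (σ i)) := by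
      rw [hCbsplit, hIoc]
      push_cast
      ring
    rw [hpz] at h3
    have h5 : (↑(∑ i ∈ Finset.Ioo s (σ.symm (bJob m)), p (σ i)) : ℤ) ≤ (m:ℤ)*(B:ℤ)^2 + B := by
      push_cast at h3 h4 ⊢
      linarith
    exact_mod_cast h5
  have hIoolb : (2*m - (s:ℕ)) * (B^2+1) ≤ ∑ i ∈ Finset.Ioo s (σ.symm (bJob m)), p (σ i) := by
    have hbound : ∀ i ∈ Finset.Ioo s (σ.symm (bJob m)), B^2 + 1 ≤ p (σ i) := by
      intro i hi
      rw [Finset.mem_Ioo] at hi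
      have hz : σ i ≠ zJob m := by
        intro h
        have : i = s := by rw [hsdef, ← h, Equiv.symm_apply_apply]
        rw [this] at hi
        exact lt_irrefl _ hi.1
      have hb2 : σ i ≠ bJob m := by
        intro h
        have : i = σ.symm (bJob m) := by rw [← h, Equiv.symm_apply_apply]
        rw [this] at hi
        exact lt_irrefl _ hi.2
      have h1 : ((σ i : Fin (2*m+2)) : ℕ) < 2*m+2 := (σ i).isLt
      have h2 : ((σ i : Fin (2*m+2)) : ℕ) ≠ 2*m := fun h => hz (Fin.val_injective h)
      have h3' : ((σ i : Fin (2*m+2)) : ℕ) ≠ 2*m+1 := fun h => hb2 (Fin.val_injective h)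
      have hord : ((σ i : Fin (2*m+2)) : ℕ) < 2*m := by omega
      rw [hpval _ hord]
      have := ha ⟨(σ i : ℕ), hord⟩
      omega
    have := Finset.card_nsmul_le_sum _ _ _ hbound
    rw [Fin.card_Ioo, hblast, smul_eq_mul] at this
    have heq : 2*m+1 - (s:ℕ) - 1 = 2*m - (s:ℕ) := by omega
    rw [heq] at this
    exact this
  have hs_ge : m ≤ (s:ℕ) := by
    by_contra hlt
    push_neg at hlt
    have h5 : (m+1) * (B^2+1) ≤ (2*m - (s:ℕ)) * (B^2+1) :=
      Nat.mul_le_mul_right _ (by omega)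
    have h6 : (m+1)*(B^2+1) ≤ m*B^2+B := le_trans h5 (le_trans hIoolb hQle)
    exact feas_contra_aux m B hm h6
  -- now the total-completion-time lower bound forces s ≤ m
  set q : Fin (2*m) → ℕ := fun k => (σ.symm ⟨(k:ℕ), by have := k.isLt; omega⟩ : ℕ) with hq
  have hqle : ∀ k, q k ≤ 2*m := by
    intro k
    have h1 : q k < 2*m+2 := (σ.symm ⟨(k:ℕ), by have := k.isLt; omega⟩).isLt
    have h2 : q k ≠ 2*m+1 := by
      intro h
      have h3 : σ.symm ⟨(k:ℕ), by have := k.isLt; omega⟩ = σ.symm (bJob m) :=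
        Fin.val_injective (h.trans hblast.symm)
      have h4 := σ.symm.injective h3
      have h5 := congrArg Fin.val h4
      simp only [bJob] at h5
      have := k.isLt
      omega
    omega
  have hqnes : ∀ k, q k ≠ (s:ℕ) := by
    intro k h
    have h3 : σ.symm ⟨(k:ℕ), by have := k.isLt; omega⟩ = s := Fin.val_injective h
    rw [hsdef] at h3
    have h4 := σ.symm.injective h3
    have h5 := congrArg Fin.val h4
    simp only [zJob] at h5
    have := k.isLt
    omega
  have hqinj : ∀ k l : Fin (2*m), q k = q l → k = l := by
    intro k l h
    have h3 : σ.symm ⟨(k:ℕ), by have := k.isLt; omega⟩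
        = σ.symm ⟨(l:ℕ), by have := l.isLt; omega⟩ := Fin.val_injective h
    have h4 := σ.symm.injective h3
    have h5 := congrArg Fin.val h4
    exact Fin.val_injective h5
  have hSCsplit : SC = ∑ k : Fin (2*m), (2*m+1 - q k) * (B^2 + a k) := by
    rw [hSCdef, sum_split_aux (fun j => c j * p j), hpz]
    have hcb : c (bJob m) = 0 := by simp only [hc]; omega
    rw [hcb]
    simp only [mul_zero, zero_mul, add_zero]
    refine Finset.sum_congr rfl fun k _ => ?_
    rw [hpval _ k.isLt]
  have hSC2 : (∑ k : Fin (2*m), (2*m+1 - q k)) * B^2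
      + (∑ k : Fin (2*m), (2*m+1 - q k) * a k) ≤ CEOP m B a := by
    calc (∑ k : Fin (2*m), (2*m+1 - q k)) * B^2 + (∑ k : Fin (2*m), (2*m+1 - q k) * a k)
        = ∑ k : Fin (2*m), (2*m+1 - q k) * (B^2 + a k) := by
          rw [Finset.sum_mul, ← Finset.sum_add_distrib]
          exact Finset.sum_congr rfl fun k _ => by ring
      _ = SC := hSCsplit.symm
      _ ≤ _ := hSCle
  have hTP : (∑ k : Fin (2*m), (2*m+1 - q k)) + (∑ k : Fin (2*m), q k) = 2*m*(2*m+1) := by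
    rw [← Finset.sum_add_distrib]
    rw [Finset.sum_congr rfl (fun k (_ : k ∈ Finset.univ) =>
      (by have := hqle k; omega : (2*m+1 - q k) + q k = 2*m+1))]
    rw [Finset.sum_const, Finset.card_univ, Fintype.card_fin, smul_eq_mul]
  have hPle : (∑ k : Fin (2*m), q k) + (s:ℕ) ≤ ∑ i ∈ Finset.range (2*m+1), i := by
    have himg : ∑ k : Fin (2*m), q k = ∑ i ∈ Finset.image q Finset.univ, i :=
      (Finset.sum_image (f := fun i : ℕ => i) (g := q) (s := Finset.univ)
        (fun x _ y _ h => hqinj x y h)).symm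
    have hsub : Finset.image q Finset.univ ⊆ (Finset.range (2*m+1)).erase (s:ℕ) := by
      intro i hi
      simp only [Finset.mem_image] at hi
      obtain ⟨k, _, rfl⟩ := hi
      simp only [Finset.mem_erase, Finset.mem_range]
      exact ⟨hqnes k, by have := hqle k; omega⟩
    have h2 : (∑ i ∈ Finset.image q Finset.univ, i)
        ≤ ∑ i ∈ (Finset.range (2*m+1)).erase (s:ℕ), i :=
      Finset.sum_le_sum_of_subset hsub
    have h3 : (∑ i ∈ (Finset.range (2*m+1)).erase (s:ℕ), i) + (s:ℕ)
        = ∑ i ∈ Finset.range (2*m+1), i :=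
      Finset.sum_erase_add _ _ (Finset.mem_range.mpr (by omega))
    omega
  have hRval : (∑ i ∈ Finset.range (2*m+1), i) * 2 = (2*m+1)*(2*m) :=
    Finset.sum_range_id_mul_two _
  have htl : 2*m-1 < 2*m := by omega
  have hAatop : 4*B ≤ (∑ k : Fin (2*m), (2*m+1 - q k) * a k) + a ⟨2*m-1, htl⟩ := by
    have hmonole : ∀ k : Fin (2*m), a k ≤ a ⟨2*m-1, htl⟩ := by
      intro k
      apply hmono.monotone
      rw [Fin.le_def]
      have := k.isLt
      simp only []
      omega
    have hterm : ∀ k : Fin (2*m), 2 * a k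
        ≤ (2*m+1 - q k) * a k + (if q k = 2*m then a ⟨2*m-1, htl⟩ else 0) := by
      intro k
      by_cases hk : q k = 2*m
      · rw [if_pos hk]
        have h1 : 2*m+1 - q k = 1 := by omega
        rw [h1, one_mul]
        have := hmonole k
        omega
      · rw [if_neg hk, add_zero]
        have h2 : 2 ≤ 2*m+1 - q k := by have := hqle k; omega
        exact Nat.mul_le_mul_right (a k) h2
    have hsum2 : (∑ k : Fin (2*m), 2 * a k)
        ≤ (∑ k : Fin (2*m), (2*m+1 - q k) * a k)
          + ∑ k : Fin (2*m), (if q k = 2*m then a ⟨2*m-1, htl⟩ else 0) := by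
      rw [← Finset.sum_add_distrib]
      exact Finset.sum_le_sum fun k _ => hterm k
    have hite : (∑ k : Fin (2*m), (if q k = 2*m then a ⟨2*m-1, htl⟩ else 0))
        ≤ a ⟨2*m-1, htl⟩ := by
      rw [← Finset.sum_filter, Finset.sum_const, smul_eq_mul]
      have hcard1 : (Finset.univ.filter fun k : Fin (2*m) => q k = 2*m).card ≤ 1 := by
        rw [Finset.card_le_one]
        intro x hx y hy
        simp only [Finset.mem_filter] at hx hy
        exact hqinj x y (hx.2.trans hy.2.symm)
      calc _ ≤ 1 * a ⟨2*m-1, htl⟩ := Nat.mul_le_mul_right _ hcard1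
        _ = _ := one_mul _
    have hlhs : (∑ k : Fin (2*m), 2 * a k) = 4*B := by
      rw [← Finset.mul_sum, hsum]
      ring
    omega
  have ha1 : ∀ j : ℕ, ∀ h : j < 2*m, j + 1 ≤ a ⟨j, h⟩ := by
    intro j
    induction j with
    | zero => intro h; exact ha _
    | succ j ih =>
      intro h
      have hj : j < 2*m := by omega
      have h1 := ih hj
      have h2 : a ⟨j, hj⟩ < a ⟨j+1, h⟩ := by
        apply hmono
        rw [Fin.lt_def]
        simp
      omega
  have hatopR : a ⟨2*m-1, htl⟩ + (∑ i ∈ Finset.range (2*m+1), i) ≤ 2*B + 2*m := by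
    have htopmem : (⟨2*m-1, htl⟩ : Fin (2*m)) ∈ Finset.univ := Finset.mem_univ _
    have h1 : (∑ k ∈ Finset.univ.erase (⟨2*m-1, htl⟩ : Fin (2*m)), a k)
        + a ⟨2*m-1, htl⟩ = 2*B :=
      (Finset.sum_erase_add _ _ htopmem).trans hsum
    have h2 : ∀ k ∈ Finset.univ.erase (⟨2*m-1, htl⟩ : Fin (2*m)), (k:ℕ)+1 ≤ a k :=
      fun k _ => ha1 k k.isLt
    have h3 : (∑ k ∈ Finset.univ.erase (⟨2*m-1, htl⟩ : Fin (2*m)), ((k:ℕ)+1))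
        ≤ ∑ k ∈ Finset.univ.erase (⟨2*m-1, htl⟩ : Fin (2*m)), a k :=
      Finset.sum_le_sum h2
    have h4 : (∑ k ∈ Finset.univ.erase (⟨2*m-1, htl⟩ : Fin (2*m)), ((k:ℕ)+1))
        + ((2*m-1)+1) = ∑ k : Fin (2*m), ((k:ℕ)+1) :=
      Finset.sum_erase_add _ _ htopmem
    have h5 : (∑ k : Fin (2*m), ((k:ℕ)+1)) = ∑ i ∈ Finset.range (2*m), (i+1) :=
      Fin.sum_univ_eq_sum_range _ _
    have h7 : (∑ i ∈ Finset.range (2*m+1), i) = ∑ i ∈ Finset.range (2*m), (i+1) := by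
      have h8 := Finset.sum_range_succ' id (2*m)
      simpa using h8
    omega
  -- upper bound for CEOP
  have hlt1 : ∀ k : Fin m, 2*(k:ℕ) < 2*m := fun k => by have := k.isLt; omega
  have hlt2 : ∀ k : Fin m, 2*(k:ℕ)+1 < 2*m := fun k => by have := k.isLt; omega
  have hpair : (∑ k : Fin m, (a ⟨2*(k:ℕ), hlt1 k⟩ + a ⟨2*(k:ℕ)+1, hlt2 k⟩)) = 2*B := by
    set f : ℕ → ℕ := fun j => if h : j < 2*m then a ⟨j, h⟩ else 0 with hf
    have e1 : (∑ k : Fin m, (a ⟨2*(k:ℕ), hlt1 k⟩ + a ⟨2*(k:ℕ)+1, hlt2 k⟩))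
        = ∑ k : Fin m, (f (2*(k:ℕ)) + f (2*(k:ℕ)+1)) := by
      refine Finset.sum_congr rfl fun k _ => ?_
      rw [hf]
      simp only []
      rw [dif_pos (hlt1 k), dif_pos (hlt2 k)]
    rw [e1, Fin.sum_univ_eq_sum_range (fun j => f (2*j) + f (2*j+1)) m, ← sum_pair_aux f m,
      ← Fin.sum_univ_eq_sum_range f (2*m)]
    rw [show (∑ k : Fin (2*m), f (k:ℕ)) = ∑ k : Fin (2*m), a k from
      Finset.sum_congr rfl fun k _ => by rw [hf]; simp only []; rw [dif_pos k.isLt]]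
    exact hsum
  have hSg : (∑ k : Fin m, (m - (k:ℕ))) * 2 = m*(m+1) := by
    have e : (∑ k : Fin m, (m - (k:ℕ))) = ∑ i ∈ Finset.range m, (m - i) :=
      Fin.sum_univ_eq_sum_range _ _
    have e2 : (∑ i ∈ Finset.range m, (m - i)) = ∑ i ∈ Finset.range m, (i+1) := by
      calc (∑ i ∈ Finset.range m, (m - i)) = ∑ i ∈ Finset.range m, ((m-1-i)+1) :=
            Finset.sum_congr rfl fun i hi => by
              have := Finset.mem_range.mp hi; omega
        _ = _ := Finset.sum_range_reflect _ m
    rw [e, e2]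
    exact gauss_aux m
  have hCle : CEOP m B a ≤ m*(m+1)*B^2 + 2*m*B + (m*B^2 + B)*(m+1) := by
    have hCeq : CEOP m B a = (∑ k : Fin m, (m - (k:ℕ)) *
        ((B^2 + a ⟨2*(k:ℕ), hlt1 k⟩) + (B^2 + a ⟨2*(k:ℕ)+1, hlt2 k⟩)))
        + (m*B^2 + B)*(m+1) := rfl
    rw [hCeq]
    have hstep : ∀ k : Fin m, (m - (k:ℕ)) *
        ((B^2 + a ⟨2*(k:ℕ), hlt1 k⟩) + (B^2 + a ⟨2*(k:ℕ)+1, hlt2 k⟩))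
        ≤ (m - (k:ℕ))*2*B^2 + m*(a ⟨2*(k:ℕ), hlt1 k⟩ + a ⟨2*(k:ℕ)+1, hlt2 k⟩) := by
      intro k
      have h1 : (m - (k:ℕ)) ≤ m := by omega
      have heq : (m - (k:ℕ)) * ((B^2 + a ⟨2*(k:ℕ), hlt1 k⟩) + (B^2 + a ⟨2*(k:ℕ)+1, hlt2 k⟩))
          = (m - (k:ℕ))*2*B^2
            + (m - (k:ℕ))*(a ⟨2*(k:ℕ), hlt1 k⟩ + a ⟨2*(k:ℕ)+1, hlt2 k⟩) := by ring
      rw [heq]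
      exact add_le_add_right (Nat.mul_le_mul_right _ h1) _
    have h2 : (∑ k : Fin m, (m - (k:ℕ)) *
        ((B^2 + a ⟨2*(k:ℕ), hlt1 k⟩) + (B^2 + a ⟨2*(k:ℕ)+1, hlt2 k⟩)))
        ≤ (∑ k : Fin m, (m - (k:ℕ)))*2*B^2
          + m * ∑ k : Fin m, (a ⟨2*(k:ℕ), hlt1 k⟩ + a ⟨2*(k:ℕ)+1, hlt2 k⟩) := by
      calc (∑ k : Fin m, (m - (k:ℕ)) *
          ((B^2 + a ⟨2*(k:ℕ), hlt1 k⟩) + (B^2 + a ⟨2*(k:ℕ)+1, hlt2 k⟩)))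
          ≤ ∑ k : Fin m, ((m - (k:ℕ))*2*B^2
            + m*(a ⟨2*(k:ℕ), hlt1 k⟩ + a ⟨2*(k:ℕ)+1, hlt2 k⟩)) :=
            Finset.sum_le_sum fun k _ => hstep k
        _ = _ := by rw [Finset.sum_add_distrib, ← Finset.mul_sum, Finset.sum_mul, Finset.sum_mul]
    rw [hpair, hSg] at h2
    have h3 : m*(m+1)*B^2 + m*(2*B) = m*(m+1)*B^2 + 2*m*B := by ring
    rw [h3] at h2
    exact add_le_add_left h2 _
  have hRval2 : (∑ i ∈ Finset.range (2*m+1), i) = 2*m*m + m := by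
    have h1 : (∑ i ∈ Finset.range (2*m+1), i) * 2 = (2*m*m + m) * 2 := by
      rw [hRval]; ring
    exact Nat.eq_of_mul_eq_mul_right (by norm_num) h1
  have hs_le : (s:ℕ) ≤ m := by
    by_contra hgt
    push_neg at hgt
    have hgt' : m + 1 ≤ (s:ℕ) := hgt
    have hTP' : (∑ k : Fin (2*m), (2*m+1 - q k)) + (∑ k : Fin (2*m), q k)
        = (∑ i ∈ Finset.range (2*m+1), i) * 2 := by
      rw [hRval, hTP]
      ring
    have hT2 : 2*m*m + 2*m + 1 ≤ ∑ k : Fin (2*m), (2*m+1 - q k) := by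
      rw [hRval2] at hTP' hPle
      omega
    have hAge : 2*B + 2*m*m + m ≤ (∑ k : Fin (2*m), (2*m+1 - q k) * a k) + 2*m := by
      rw [hRval2] at hatopR
      omega
    have hfin1 : (2*m*m + 2*m + 1) * B^2
        + (∑ k : Fin (2*m), (2*m+1 - q k) * a k) ≤ CEOP m B a :=
      le_trans (add_le_add_left (Nat.mul_le_mul_right _ hT2) _) hSC2
    have h6 : (2*m*m + 2*m + 1) * B^2 + (2*B + 2*m*m + m)
        ≤ m*(m+1)*B^2 + 2*m*B + (m*B^2 + B)*(m+1) + 2*m := by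
      have h6a := le_trans hfin1 hCle
      linarith [h6a, hAge]
    exact final_contra_aux m B hm hB h6
  rw [hcard]
  omega
end

section
/- Given integers a_1,...,a_m with Σ a_i = 2B, the constructed instance of 1|er|max L_j (jobs 1..m with p_j = a_j and d_j = 2B+1; r-jobs m+1 with p=1, d=B+1 and m+2 with p=1, d=2B+2; renting budget K^r = B+2) admits a feasible sequence with maximum lateness at most 0 if and only if there is a subset of {a_1,...,a_m} with total value B. -/
/-- processing times: jobs `0..m-1` have `p = a_j`; the two r-jobs `m` and `m+1`
have `p = 1`. -/
def pPar (m : ℕ) (a : Fin m → ℕ) : Fin (m+2) → ℕ := fun j =>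
  if h : (j : ℕ) < m then a ⟨j, h⟩ else 1

/-- due dates: `d_j = 2B+1` for ordinary jobs, `d_{m+1} = B+1` (job `m`),
`d_{m+2} = 2B+2` (job `m+1`). -/
def dPar (m B : ℕ) : Fin (m+2) → ℤ := fun j =>
  if (j : ℕ) < m then 2*B+1 else if (j : ℕ) = m then B+1 else 2*B+2

/-- the r-job with due date `B+1`. -/
def zP (m : ℕ) : Fin (m+2) := ⟨m, by omega⟩

/-- the r-job with due date `2B+2`. -/
def bP (m : ℕ) : Fin (m+2) := ⟨m+1, by omega⟩

/-- feasibility: renting period (start of first r-job to completion of last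
r-job) at most `K^r = B+2`. -/
def feasPar (m B : ℕ) (a : Fin m → ℕ) (σ : Equiv.Perm (Fin (m+2))) : Prop :=
  max ((Cjob (pPar m a) σ (zP m) : ℤ)) ((Cjob (pPar m a) σ (bP m) : ℤ)) -
      min ((Cjob (pPar m a) σ (zP m) : ℤ) - pPar m a (zP m))
        ((Cjob (pPar m a) σ (bP m) : ℤ) - pPar m a (bP m)) ≤
    (B : ℤ) + 2

lemma Cjob_eq_filter {n : ℕ} (p : Fin n → ℕ) (σ : Equiv.Perm (Fin n)) (j : Fin n) :
    Cjob p σ j = ∑ j' ∈ Finset.univ.filter (fun j' => σ.symm j' ≤ σ.symm j), p j' := by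
  unfold Cjob
  refine Finset.sum_nbij' (fun i => σ i) (fun j' => σ.symm j') ?_ ?_ ?_ ?_ ?_ <;>
    simp [Finset.mem_Iic]

lemma sum_take_map {α : Type*} (f : α → ℕ) (l : List α) (k : ℕ) (hk : k ≤ l.length) :
    ((l.take k).map f).sum
      = ∑ i ∈ Finset.range k, (if h : i < l.length then f l[i] else 0) := by
  induction k with
  | zero => simp
  | succ k ih =>
    rw [Finset.sum_range_succ, ← ih (by omega), dif_pos (show k < l.length by omega),
      List.take_succ, List.getElem?_eq_getElem (show k < l.length by omega)]
    rw [List.map_append, List.sum_append]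
    simp

lemma sum_Iic_range {n : ℕ} (g : Fin n → ℕ) (k : Fin n) :
    ∑ i ∈ Finset.Iic k, g i
      = ∑ i ∈ Finset.range (k+1), (if h : i < n then g ⟨i, h⟩ else 0) := by
  refine Finset.sum_nbij' (fun i => (i : ℕ))
    (fun i => if h : i < n then (⟨i, h⟩ : Fin n) else k) ?_ ?_ ?_ ?_ ?_
  · intro a ha; simp_all [Finset.mem_Iic, Finset.mem_range]
  · intro a ha
    simp only [Finset.mem_range] at ha
    have h : a < n := by omega
    simp only [dif_pos h, Finset.mem_Iic]
    exact Fin.mk_le_of_le_val (by omega)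
  · intro a ha; simp
  · intro a ha
    simp only [Finset.mem_range] at ha
    have h : a < n := by omega
    simp [dif_pos h]
  · intro a ha; simp

lemma exists_perm_of_list {n : ℕ} (p : Fin n → ℕ) (l : List (Fin n)) (hnd : l.Nodup)
    (hlen : l.length = n) :
    ∃ σ : Equiv.Perm (Fin n), ∀ (l₁ : List (Fin n)) (j : Fin n) (l₂ : List (Fin n)),
      l = l₁ ++ j :: l₂ → Cjob p σ j = (l₁.map p).sum + p j := by
  have hmem : ∀ j : Fin n, j ∈ l := by
    have huniv : l.toFinset = Finset.univ := by
      apply Finset.eq_univ_of_card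
      rw [List.toFinset_card_of_nodup hnd, hlen, Fintype.card_fin]
    intro j; rw [← List.mem_toFinset, huniv]; exact Finset.mem_univ j
  have hidx : ∀ j : Fin n, l.idxOf j < l.length := fun j =>
    List.idxOf_lt_length_iff.2 (hmem j)
  set f : Fin n → Fin n := fun j => ⟨l.idxOf j, by have := hidx j; omega⟩ with hf
  have hinj : Function.Injective f := by
    intro x y hxy
    have h : l.idxOf x = l.idxOf y := congrArg Fin.val hxy
    have hx := List.idxOf_get (hidx x)
    have hy := List.idxOf_get (hidx y)
    rw [← hx, ← hy]
    congr 1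
    exact Fin.ext h
  set e := Equiv.ofBijective f ((Finite.injective_iff_bijective).mp hinj) with he
  refine ⟨e.symm, ?_⟩
  have hsymm : ∀ j, (e.symm).symm j = f j := fun j => rfl
  have happ : ∀ i : Fin n, (e.symm) i = l.get (Fin.cast hlen.symm i) := by
    intro i
    apply hinj
    have h1 : f (e.symm i) = e (e.symm i) := rfl
    rw [h1, Equiv.apply_symm_apply]
    apply Fin.ext
    show (i : ℕ) = l.idxOf (l.get (Fin.cast hlen.symm i))
    rw [List.get_idxOf hnd]
    rfl
  intro l₁ j l₂ hdec
  have hjnot : j ∉ l₁ := by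
    rw [hdec] at hnd
    have := (List.nodup_append.1 hnd).2.2
    intro hj
    exact this j hj j List.mem_cons_self rfl
  have hidxj : l.idxOf j = l₁.length := by
    rw [hdec, List.idxOf_append_of_notMem hjnot, List.idxOf_cons_self]
    omega
  unfold Cjob
  rw [hsymm j]
  have hval : ((f j : Fin n) : ℕ) = l₁.length := hidxj
  calc ∑ i ∈ Finset.Iic (f j), p ((e.symm) i)
      = ∑ i ∈ Finset.range ((f j : ℕ)+1),
          (if h : i < n then p ((e.symm) ⟨i, h⟩) else 0) :=
        sum_Iic_range (fun i => p ((e.symm) i)) (f j)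
    _ = ∑ i ∈ Finset.range (l₁.length+1),
          (if h : i < n then p ((e.symm) ⟨i, h⟩) else 0) := by rw [hval]
    _ = ((l.take (l₁.length+1)).map p).sum := by
        have hL : l₁.length + 1 ≤ l.length := by
          rw [hdec, List.length_append, List.length_cons]; omega
        rw [sum_take_map p l (l₁.length+1) hL]
        apply Finset.sum_congr rfl
        intro i hi
        simp only [Finset.mem_range] at hi
        have h : i < n := by omega
        have h' : i < l.length := by omega
        rw [dif_pos h, dif_pos h', happ ⟨i, h⟩]
        rfl
    _ = ((l₁ ++ [j]).map p).sum := by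
        congr 1
        rw [hdec, List.take_append]
        rw [List.take_of_length_le (by omega)]
        congr 1
        simp
    _ = (l₁.map p).sum + p j := by simp

def embJ (m : ℕ) (i : Fin m) : Fin (m+2) := ⟨i, by omega⟩

lemma embJ_inj (m : ℕ) : Function.Injective (embJ m) := by
  intro x y h
  have h2 : ((x : ℕ)) = (y : ℕ) := congrArg (fun t : Fin (m+2) => (t : ℕ)) h
  exact Fin.ext h2

lemma pPar_embJ (m : ℕ) (a : Fin m → ℕ) (i : Fin m) : pPar m a (embJ m i) = a i := by
  simp [pPar, embJ]

lemma pPar_zP (m : ℕ) (a : Fin m → ℕ) : pPar m a (zP m) = 1 := by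
  simp [pPar, zP]

lemma pPar_bP (m : ℕ) (a : Fin m → ℕ) : pPar m a (bP m) = 1 := by
  simp [pPar, bP]

lemma pPar_total (m B : ℕ) (a : Fin m → ℕ) (hsum : ∑ i, a i = 2*B) :
    ∑ j, pPar m a j = 2*B+2 := by
  rw [Fin.sum_univ_castSucc, Fin.sum_univ_castSucc]
  have h1 : ∀ j : Fin m, pPar m a (Fin.castSucc (Fin.castSucc j)) = a j := by
    intro j; simp [pPar]
  have h2 : pPar m a (Fin.last (m+1)) = 1 := by simp [pPar]
  have h3 : pPar m a (Fin.castSucc (Fin.last m)) = 1 := by simp [pPar]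
  rw [h2, h3, Finset.sum_congr rfl (fun j _ => h1 j), hsum]

lemma sum_sort_map (m : ℕ) (S : Finset (Fin m)) (f : Fin m → ℕ) :
    ((S.sort (·≤·)).map f).sum = ∑ i ∈ S, f i := by
  rw [List.Perm.sum_eq (List.Perm.map f (Finset.sort_perm_toList S _))]
  exact Finset.sum_map_toList S f


/-- the Partition reduction instance of `1|er|max L_j` admits a
feasible sequence with maximum lateness at most `0` iff there is a subset of
the `a_i` summing to `B`. -/
theorem stmt7 (m B : ℕ) (a : Fin m → ℕ) (hsum : ∑ i, a i = 2*B) :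
    (∃ σ : Equiv.Perm (Fin (m+2)),
        feasPar m B a σ ∧ ∀ j, (Cjob (pPar m a) σ j : ℤ) - dPar m B j ≤ 0) ↔
      (∃ S : Finset (Fin m), ∑ i ∈ S, a i = B) := by
  constructor
  · rintro ⟨σ, hfeas, hlate⟩
    have hlast : σ.symm (bP m) = Fin.last (m+1) := by
      have h1 : Cjob (pPar m a) σ (σ (Fin.last (m+1))) = 2*B+2 := by
        rw [Cjob_eq_filter]
        have he : Finset.univ.filter
            (fun j' => σ.symm j' ≤ σ.symm (σ (Fin.last (m+1)))) = Finset.univ := by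
          apply Finset.eq_univ_of_forall
          intro x
          simp [Fin.le_last]
        rw [he]
        exact pPar_total m B a hsum
      have h2 := hlate (σ (Fin.last (m+1)))
      rw [h1] at h2
      have h3 : ((σ (Fin.last (m+1)) : Fin (m+2)) : ℕ) = m + 1 := by
        unfold dPar at h2
        by_contra hne
        rcases lt_or_ge ((σ (Fin.last (m+1)) : Fin (m+2)) : ℕ) m with h | h
        · rw [if_pos h] at h2; push_cast at h2; omega
        · have hm : ((σ (Fin.last (m+1)) : Fin (m+2)) : ℕ) = m := by
            have := (σ (Fin.last (m+1))).isLt; omega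
          rw [if_neg (by omega), if_pos hm] at h2; push_cast at h2; omega
      have hb : σ (Fin.last (m+1)) = bP m := Fin.ext h3
      rw [← hb]; simp
    have hCb : Cjob (pPar m a) σ (bP m) = 2*B+2 := by
      rw [Cjob_eq_filter]
      have he : Finset.univ.filter (fun j' => σ.symm j' ≤ σ.symm (bP m))
          = Finset.univ := by
        apply Finset.eq_univ_of_forall; intro x; simp [hlast, Fin.le_last]
      rw [he]; exact pPar_total m B a hsum
    have hCz_le : Cjob (pPar m a) σ (zP m) ≤ B+1 := by
      have h := hlate (zP m)
      have hd : dPar m B (zP m) = (B:ℤ)+1 := by simp [dPar, zP]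
      rw [hd] at h; omega
    have hCz : Cjob (pPar m a) σ (zP m) = B+1 := by
      unfold feasPar at hfeas
      rw [pPar_zP, pPar_bP, hCb] at hfeas
      push_cast at hfeas
      omega
    refine ⟨Finset.univ.filter (fun i => σ.symm (embJ m i) ≤ σ.symm (zP m)), ?_⟩
    have hzb : zP m ≠ bP m := by
      intro h
      have := congrArg (fun t : Fin (m+2) => (t : ℕ)) h
      simp [zP, bP] at this
    have hfilter : Finset.univ.filter (fun j' => σ.symm j' ≤ σ.symm (zP m))
        = insert (zP m) ((Finset.univ.filter
            (fun i => σ.symm (embJ m i) ≤ σ.symm (zP m))).image (embJ m)) := by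
      ext j'
      simp only [Finset.mem_filter, Finset.mem_univ, true_and, Finset.mem_insert,
        Finset.mem_image]
      constructor
      · intro h
        rcases lt_or_ge ((j' : ℕ)) m with hlt | hge
        · right
          refine ⟨⟨j', hlt⟩, ?_, ?_⟩
          · have : embJ m ⟨(j' : ℕ), hlt⟩ = j' := Fin.ext rfl
            rw [this]; exact h
          · exact Fin.ext rfl
        · rcases eq_or_lt_of_le hge with heq | hgt
          · left; exact Fin.ext heq.symm
          · exfalso
            have hb : j' = bP m := by
              apply Fin.ext
              have := j'.isLt
              simp only [bP]
              omega
            rw [hb, hlast] at h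
            have h4 : σ.symm (zP m) = Fin.last (m+1) := le_antisymm (Fin.le_last _) h
            have h5 : zP m = bP m := by
              apply σ.symm.injective; rw [h4, hlast]
            exact hzb h5
      · rintro (rfl | ⟨i, hi, rfl⟩)
        · exact le_refl _
        · exact hi
    have hnotmem : zP m ∉ (Finset.univ.filter
        (fun i => σ.symm (embJ m i) ≤ σ.symm (zP m))).image (embJ m) := by
      intro hmem
      obtain ⟨i, _, hi⟩ := Finset.mem_image.1 hmem
      have h6 := congrArg (fun t : Fin (m+2) => (t : ℕ)) hi
      have h7 := i.isLt
      simp [embJ, zP] at h6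
      omega
    have hsum2 := Cjob_eq_filter (pPar m a) σ (zP m)
    rw [hfilter, Finset.sum_insert hnotmem,
      Finset.sum_image (fun x _ y _ h => embJ_inj m h)] at hsum2
    rw [hCz, pPar_zP] at hsum2
    have hcongr : ∀ i ∈ Finset.univ.filter
        (fun i => σ.symm (embJ m i) ≤ σ.symm (zP m)),
        pPar m a (embJ m i) = a i := fun i _ => pPar_embJ m a i
    rw [Finset.sum_congr rfl hcongr] at hsum2
    set s := ∑ i ∈ Finset.univ.filter
        (fun i => σ.symm (embJ m i) ≤ σ.symm (zP m)), a i with hs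
    omega
  · rintro ⟨S, hS⟩
    classical
    set l1 : List (Fin (m+2)) := (S.sort (·≤·)).map (embJ m) with hl1def
    set l3 : List (Fin (m+2)) := ((Sᶜ).sort (·≤·)).map (embJ m) with hl3def
    set l : List (Fin (m+2)) := l1 ++ zP m :: (l3 ++ [bP m]) with hldef
    have hml1 : ∀ x, x ∈ l1 ↔ ∃ i, i ∈ S ∧ embJ m i = x := by
      intro x; simp [hl1def, Finset.mem_sort]
    have hml3 : ∀ x, x ∈ l3 ↔ ∃ i, i ∉ S ∧ embJ m i = x := by
      intro x; simp [hl3def, Finset.mem_sort]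
    have hlt1 : ∀ x ∈ l1, (x : ℕ) < m := by
      intro x hx; obtain ⟨i, _, rfl⟩ := (hml1 x).1 hx; exact i.isLt
    have hlt3 : ∀ x ∈ l3, (x : ℕ) < m := by
      intro x hx; obtain ⟨i, _, rfl⟩ := (hml3 x).1 hx; exact i.isLt
    have hnd1 : l1.Nodup := (Finset.sort_nodup _ _).map (embJ_inj m)
    have hnd3 : l3.Nodup := (Finset.sort_nodup _ _).map (embJ_inj m)
    have hndl : l.Nodup := by
      rw [hldef, List.nodup_append]
      refine ⟨hnd1, ?_, ?_⟩
      · rw [List.nodup_cons]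
        constructor
        · intro hz
          rcases List.mem_append.1 hz with h | h
          · have := hlt3 _ h; simp [zP] at this
          · simp only [List.mem_singleton] at h
            have := congrArg (fun t : Fin (m+2) => (t : ℕ)) h
            simp [zP, bP] at this
        · rw [List.nodup_append]
          refine ⟨hnd3, List.nodup_singleton _, ?_⟩
          intro x hx b hb hxb
          simp only [List.mem_singleton] at hb
          subst hb
          subst hxb
          have := hlt3 _ hx; simp [bP] at this
      · intro x hx y hmem hxy
        subst hxy
        have hxm := hlt1 _ hx
        rcases List.mem_cons.1 hmem with rfl | h
        · simp [zP] at hxm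
        · rcases List.mem_append.1 h with h' | h'
          · obtain ⟨i, hiS, hieq⟩ := (hml1 x).1 hx
            obtain ⟨i', hi'S, hi'eq⟩ := (hml3 x).1 h'
            have hii : i = i' := embJ_inj m (by rw [hieq, hi'eq])
            subst hii; exact hi'S hiS
          · simp only [List.mem_singleton] at h'
            subst h'
            simp [bP] at hxm
    have hcard : S.card ≤ m := by
      have := Finset.card_le_univ S
      simpa using this
    have hlen1 : l1.length = S.card := by
      simp [hl1def, Finset.length_sort]
    have hlen3 : l3.length = m - S.card := by
      simp [hl3def, Finset.length_sort, Finset.card_compl]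
    have hlenl : l.length = m + 2 := by
      rw [hldef, List.length_append, List.length_cons, List.length_append,
        List.length_singleton, hlen1, hlen3]
      omega
    have hsum1 : (l1.map (pPar m a)).sum = B := by
      rw [hl1def, List.map_map]
      have hcomp : pPar m a ∘ embJ m = a := funext (fun i => pPar_embJ m a i)
      rw [hcomp, sum_sort_map, hS]
    have hsumc : ∑ i ∈ Sᶜ, a i = B := by
      have h := Finset.sum_add_sum_compl S a
      rw [hS, hsum] at h
      omega
    have hsum3 : (l3.map (pPar m a)).sum = B := by
      rw [hl3def, List.map_map]
      have hcomp : pPar m a ∘ embJ m = a := funext (fun i => pPar_embJ m a i)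
      rw [hcomp, sum_sort_map, hsumc]
    obtain ⟨σ, hσ⟩ := exists_perm_of_list (pPar m a) l hndl hlenl
    have hCz : Cjob (pPar m a) σ (zP m) = B + 1 := by
      rw [hσ l1 (zP m) (l3 ++ [bP m]) hldef, hsum1, pPar_zP]
    have hCb : Cjob (pPar m a) σ (bP m) = 2*B + 2 := by
      have hdec : l = (l1 ++ zP m :: l3) ++ bP m :: [] := by
        rw [hldef]; simp
      have hsmid : ((l1 ++ zP m :: l3).map (pPar m a)).sum = 2*B + 1 := by
        rw [List.map_append, List.sum_append, hsum1, List.map_cons,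
          List.sum_cons, pPar_zP, hsum3]
        omega
      rw [hσ _ (bP m) [] hdec, hsmid, pPar_bP]
    refine ⟨σ, ?_, ?_⟩
    · unfold feasPar
      rw [hCz, hCb, pPar_zP, pPar_bP]
      push_cast
      omega
    · intro j
      rcases lt_or_ge (j : ℕ) m with hj | hj
      · have hd : dPar m B j = 2*(B:ℤ)+1 := by simp [dPar, hj]
        have hub : Cjob (pPar m a) σ j ≤ 2*B+1 := by
          by_cases hiS : (⟨(j:ℕ), hj⟩ : Fin m) ∈ S
          · have hjl : j ∈ l1 := (hml1 j).2 ⟨⟨(j:ℕ), hj⟩, hiS, Fin.ext rfl⟩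
            obtain ⟨s, t, hst⟩ := List.append_of_mem hjl
            have hdec : l = s ++ j :: (t ++ zP m :: (l3 ++ [bP m])) := by
              rw [hldef, hst]; simp
            rw [hσ s j _ hdec]
            have hsub : List.Sublist (s ++ [j]) l1 := by
              rw [hst]
              exact List.Sublist.append_left
                (List.cons_sublist_cons.mpr (List.nil_sublist t)) s
            have h3 := List.Sublist.sum_le_sum
              (List.Sublist.map (pPar m a) hsub) (fun x _ => Nat.zero_le x)
            rw [hsum1] at h3
            have h4 : (s.map (pPar m a)).sum + pPar m a j ≤ B := by
              simpa using h3
            have hBle : B ≤ 2*B+1 := by omega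
            exact le_trans h4 hBle
          · have hjl : j ∈ l3 := by
              refine (hml3 j).2 ⟨⟨(j:ℕ), hj⟩, ?_, Fin.ext rfl⟩
              exact hiS
            obtain ⟨s, t, hst⟩ := List.append_of_mem hjl
            have hdec : l = (l1 ++ zP m :: s) ++ j :: (t ++ [bP m]) := by
              rw [hldef, hst]; simp
            rw [hσ _ j _ hdec]
            have hsub : List.Sublist (s ++ [j]) l3 := by
              rw [hst]
              exact List.Sublist.append_left
                (List.cons_sublist_cons.mpr (List.nil_sublist t)) s
            have h3 := List.Sublist.sum_le_sum
              (List.Sublist.map (pPar m a) hsub) (fun x _ => Nat.zero_le x)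
            rw [hsum3] at h3
            have h4 : (s.map (pPar m a)).sum + pPar m a j ≤ B := by
              simpa using h3
            have h5 : ((l1 ++ zP m :: s).map (pPar m a)).sum
                = B + 1 + (s.map (pPar m a)).sum := by
              rw [List.map_append, List.sum_append, hsum1, List.map_cons,
                List.sum_cons, pPar_zP]
              ring
            rw [h5]
            linarith
        rw [hd]
        have hub' : (Cjob (pPar m a) σ j : ℤ) ≤ 2*B+1 := by exact_mod_cast hub
        linarith
      · rcases eq_or_lt_of_le hj with heq | hgt
        · have hjz : j = zP m := Fin.ext heq.symm
          subst hjz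
          rw [hCz]
          have hd : dPar m B (zP m) = (B:ℤ)+1 := by simp [dPar, zP]
          rw [hd]
          push_cast
          omega
        · have hjb : j = bP m := by
            apply Fin.ext
            have := j.isLt
            simp only [bP]
            omega
          subst hjb
          rw [hCb]
          have hd : dPar m B (bP m) = 2*(B:ℤ)+2 := by
            simp [dPar, bP]
          rw [hd]
          push_cast
          omega
end

section
/- In the Partition reduction for 1|er|max L_j, any feasible sequence with maximum lateness at most 0 must schedule job m+2 in the last position and start job m+1 exactly at time B. -/
lemma sum_pPar (m B : ℕ) (a : Fin m → ℕ) (hsum : ∑ i, a i = 2*B) :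
    ∑ j, pPar m a j = 2*B + 2 := by
  rw [Fin.sum_univ_castSucc, Fin.sum_univ_castSucc]
  have h1 : pPar m a (Fin.last (m+1)) = 1 := by
    simp [pPar, Fin.last]
  have h2 : pPar m a ((Fin.last m).castSucc) = 1 := by
    simp [pPar, Fin.last]
  have h3 : ∀ i : Fin m, pPar m a (i.castSucc.castSucc) = a i := by
    intro i
    simp [pPar, i.isLt]
  simp only [h1, h2, h3, hsum]

lemma Clast (m B : ℕ) (a : Fin m → ℕ) (hsum : ∑ i, a i = 2*B)
    (σ : Equiv.Perm (Fin (m+2))) :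
    Cjob (pPar m a) σ (σ ⟨m+1, Nat.lt_succ_self _⟩) = 2*B + 2 := by
  have hlast : (⟨m+1, Nat.lt_succ_self _⟩ : Fin (m+2)) = Fin.last (m+1) := rfl
  rw [Cjob, Equiv.symm_apply_apply, hlast]
  have : Finset.Iic (Fin.last (m+1)) = Finset.univ := by
    ext x; simp [Fin.le_last]
  rw [this, Equiv.sum_comp σ (pPar m a), sum_pPar m B a hsum]

/-- in the Partition reduction, any feasible sequence with maximum
lateness at most `0` schedules job `m+2` last and starts job `m+1` exactly at
time `B`. -/
theorem stmt8 (m B : ℕ) (a : Fin m → ℕ) (hsum : ∑ i, a i = 2*B)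
    (σ : Equiv.Perm (Fin (m+2)))
    (hfeas : feasPar m B a σ)
    (hL : ∀ j, (Cjob (pPar m a) σ j : ℤ) - dPar m B j ≤ 0) :
    σ ⟨m+1, by omega⟩ = bP m ∧
      (Cjob (pPar m a) σ (zP m) : ℤ) - pPar m a (zP m) = B := by

  have hC := Clast m B a hsum σ
  set j0 := σ ⟨m+1, by omega⟩ with hj0
  have hLj0 := hL j0
  rw [hC] at hLj0
  have hjb : j0 = bP m := by
    unfold dPar at hLj0
    split_ifs at hLj0 with h1 h2
    · push_cast at hLj0; omega
    · push_cast at hLj0; omega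
    · have : (j0 : ℕ) = m + 1 := by omega
      exact Fin.ext this
  have hCb : (Cjob (pPar m a) σ (bP m) : ℤ) = 2*B + 2 := by
    rw [← hjb, hC]; push_cast; ring
  have hLz := hL (zP m)
  have hdz : dPar m B (zP m) = (B : ℤ) + 1 := by simp [dPar, zP]
  rw [hdz] at hLz
  have hpz : pPar m a (zP m) = 1 := by simp [pPar, zP]
  have hpb : pPar m a (bP m) = 1 := by simp [pPar, bP]
  unfold feasPar at hfeas
  rw [hCb, hpz, hpb] at hfeas
  refine ⟨hjb ▸ hj0.symm ▸ rfl, ?_⟩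
  rw [hpz]
  push_cast
  omega
end

section
/- Five-block structure for maximum lateness: for every instance of 1|er|max L_j (jobs in EDD order d_1 ≤ ... ≤ d_n, r-jobs with α = min J^r, β = max J^r, H the o-jobs between α and β) that admits a feasible sequence, there exist sets X*, Y* ⊆ H with max X* < min Y* such that the five-block sequence σ_{X*,Y*} (blocks ordered internally by EDD) is feasible and minimizes maximum lateness among all feasible sequences. -/
variable {n : ℕ}

/-- completion time of job `j` in the schedule given by the list `l`:
total processing time of the prefix of `l` up to and including `j`. -/
def comp (p : Fin n → ℕ) (l : List (Fin n)) (j : Fin n) : ℕ :=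
  ((l.takeWhile fun k => decide (k ≠ j)).map p).sum + p j

/-- the elements of a finset listed in increasing index order. -/
def sortF (s : Finset (Fin n)) : List (Fin n) := s.sort (· ≤ ·)

/-- a schedule is a permutation of all of the jobs. -/
def IsSchedule (l : List (Fin n)) : Prop := l.Perm (List.finRange n)

/-- the renting period of schedule `l`: from the start of the first r-job to
the completion of the last r-job. -/
def rent (p : Fin n → ℕ) (Jr : Finset (Fin n)) (hJr : Jr.Nonempty)
    (l : List (Fin n)) : ℤ :=
  (Jr.sup' hJr fun j => (comp p l j : ℤ)) -
    (Jr.inf' hJr fun j => (comp p l j : ℤ) - p j)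

/-- `H`: the o-jobs with index between `α = min J^r` and `β = max J^r`. -/
def Hset (Jr : Finset (Fin n)) (hJr : Jr.Nonempty) : Finset (Fin n) :=
  (Finset.Icc (Jr.min' hJr) (Jr.max' hJr)) \ Jr

/-- the five-block sequence `σ_{X,Y}`: blocks `J[1,α-1]`, `X`,
`J[α,β] \ (X ∪ Y)`, `Y`, `J[β+1,n]`, each internally in increasing index
(WSPT resp. EDD) order. -/
def fiveBlock (Jr : Finset (Fin n)) (hJr : Jr.Nonempty)
    (X Y : Finset (Fin n)) : List (Fin n) :=
  sortF (Finset.Iio (Jr.min' hJr)) ++ sortF X ++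
    sortF ((Finset.Icc (Jr.min' hJr) (Jr.max' hJr)) \ (X ∪ Y)) ++
    sortF Y ++ sortF (Finset.Ioi (Jr.max' hJr))

/-- maximum lateness of schedule `l`. -/
def Lmax (p : Fin n → ℕ) (d : Fin n → ℤ)
    (hne : (Finset.univ : Finset (Fin n)).Nonempty) (l : List (Fin n)) : ℤ :=
  Finset.univ.sup' hne fun j => (comp p l j : ℤ) - d j

section basic

lemma takeWhile_ne_eq_take (l : List (Fin n)) (j : Fin n) :
    (l.takeWhile fun k => decide (k ≠ j)) = l.take (l.idxOf j) := by
  induction l with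
  | nil => simp
  | cons a t ih =>
    by_cases h : a = j
    · subst h
      simp [List.takeWhile_cons, List.idxOf_cons_self]
    · rw [List.takeWhile_cons, List.idxOf_cons_ne _ (by simpa using h)]
      simp only [ne_eq, h, not_false_eq_true, decide_true, if_true, List.take_succ_cons,
        List.cons.injEq, true_and]
      exact ih

lemma mem_take_iff (l : List (Fin n)) (k : ℕ) (i : Fin n) :
    i ∈ l.take k ↔ i ∈ l ∧ l.idxOf i < k := by
  induction l generalizing k with
  | nil => simp
  | cons a t ih =>
    cases k with
    | zero => simp
    | succ k =>
      by_cases h : i = a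
      · subst h
        simp [List.idxOf_cons_self]
      · simp only [List.take_succ_cons, List.mem_cons, ih,
          List.idxOf_cons_ne _ (by simpa using (Ne.symm h)), h, false_or]
        constructor
        · rintro ⟨h1, h2⟩; exact ⟨h1, by omega⟩
        · rintro ⟨h1, h2⟩; exact ⟨h1, by omega⟩

lemma comp_eq_sum_take (p : Fin n → ℕ) (l : List (Fin n)) (j : Fin n) (hj : j ∈ l) :
    comp p l j = ((l.take (l.idxOf j + 1)).map p).sum := by
  have hlt : l.idxOf j < l.length := List.idxOf_lt_length_iff.2 hj
  rw [comp, takeWhile_ne_eq_take, List.take_succ, List.getElem?_eq_getElem hlt,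
    List.getElem_idxOf]
  simp

/-- prefix set of `m` in `l` -/
def Pl (l : List (Fin n)) (m : Fin n) : Finset (Fin n) :=
  Finset.univ.filter fun i => l.idxOf i ≤ l.idxOf m

lemma mem_Pl {l : List (Fin n)} {m i : Fin n} :
    i ∈ Pl l m ↔ l.idxOf i ≤ l.idxOf m := by simp [Pl]

lemma isSchedule_nodup {l : List (Fin n)} (h : IsSchedule l) : l.Nodup :=
  h.nodup_iff.2 (List.nodup_finRange n)

lemma isSchedule_mem {l : List (Fin n)} (h : IsSchedule l) (i : Fin n) : i ∈ l :=
  (h.mem_iff).2 (List.mem_finRange i)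

lemma toFinset_take (l : List (Fin n)) (hl : l.Nodup) (hall : ∀ i, i ∈ l) (k : ℕ) :
    (l.take k).toFinset = Finset.univ.filter fun i => l.idxOf i < k := by
  ext i
  simp [mem_take_iff, hall i]

lemma sum_take (p : Fin n → ℕ) (l : List (Fin n)) (hl : l.Nodup) (hall : ∀ i, i ∈ l)
    (k : ℕ) :
    ((l.take k).map p).sum = ∑ i ∈ Finset.univ.filter fun i => l.idxOf i < k, p i := by
  rw [← toFinset_take l hl hall k, List.sum_toFinset _ ((l.take_sublist k).nodup hl)]

lemma comp_schedule (p : Fin n → ℕ) {l : List (Fin n)} (h : IsSchedule l) (m : Fin n) :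
    comp p l m = ∑ i ∈ Pl l m, p i := by
  rw [comp_eq_sum_take p l m (isSchedule_mem h m),
    sum_take p l (isSchedule_nodup h) (isSchedule_mem h)]
  congr 1
  ext i
  simp [Pl, Nat.lt_succ_iff]

end basic

lemma comp_append_of_not_mem (p : Fin n → ℕ) {l₁ : List (Fin n)} (l₂ : List (Fin n))
    {j : Fin n} (h : j ∉ l₁) :
    comp p (l₁ ++ l₂) j = (l₁.map p).sum + comp p l₂ j := by
  have h1 : l₁.takeWhile (fun k => decide (k ≠ j)) = l₁ :=
    List.takeWhile_eq_self_iff.2 (fun a ha => by simp; rintro rfl; exact h ha)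
  rw [comp, List.takeWhile_append, h1, if_pos rfl, List.map_append, List.sum_append, comp]
  ring

lemma comp_append_of_mem (p : Fin n → ℕ) {l₁ : List (Fin n)} (l₂ : List (Fin n))
    {j : Fin n} (h : j ∈ l₁) :
    comp p (l₁ ++ l₂) j = comp p l₁ j := by
  have h1 : (l₁.takeWhile fun k => decide (k ≠ j)).length ≠ l₁.length := by
    intro hh
    have heq : l₁.takeWhile (fun k => decide (k ≠ j)) = l₁ :=
      (List.takeWhile_sublist _).eq_of_length hh
    have := List.mem_takeWhile_imp (heq ▸ h)
    simp at this
  rw [comp, List.takeWhile_append, if_neg h1, comp]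

lemma takeWhile_sorted_eq_filter {l : List (Fin n)} (hl : l.Pairwise (· < ·))
    {j : Fin n} (hj : j ∈ l) :
    l.takeWhile (fun k => decide (k ≠ j)) = l.filter (fun k => decide (k < j)) := by
  induction l with
  | nil => simp
  | cons a t ih =>
    have hrel : ∀ b ∈ t, a < b := fun b hb => (List.pairwise_cons.1 hl).1 b hb
    by_cases h : a = j
    · subst h
      have : t.filter (fun k => decide (k < a)) = [] := by
        rw [List.filter_eq_nil_iff]
        intro b hb
        simpa using not_lt.2 (le_of_lt (hrel b hb))
      simp [List.takeWhile_cons, this]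
    · have hjt : j ∈ t := by
        rcases List.mem_cons.1 hj with h'|h'
        · exact absurd h'.symm h
        · exact h'
      have haj : a < j := hrel j hjt
      rw [List.takeWhile_cons]
      simp only [ne_eq, h, not_false_eq_true, decide_true, if_true]
      rw [List.filter_cons, if_pos (by simpa using haj)]
      rw [ih (List.pairwise_cons.1 hl).2 hjt]

lemma sum_filter_sort (p : Fin n → ℕ) (S : Finset (Fin n)) (q : Fin n → Prop)
    [DecidablePred q] :
    (((sortF S).filter fun k => decide (q k)).map p).sum = ∑ i ∈ S.filter q, p i := by
  have hnd : ((sortF S).filter fun k => decide (q k)).Nodup :=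
    (Finset.sort_nodup S _).filter _
  have htf : ((sortF S).filter fun k => decide (q k)).toFinset = S.filter q := by
    ext i
    simp [sortF, List.mem_filter, Finset.mem_filter, Finset.mem_sort]
  rw [← htf, List.sum_toFinset _ hnd]

lemma comp_sortF (p : Fin n → ℕ) {S : Finset (Fin n)} {j : Fin n} (hj : j ∈ S) :
    comp p (sortF S) j = ∑ i ∈ S.filter (· ≤ j), p i := by
  have hj' : j ∈ sortF S := (Finset.mem_sort _).2 hj
  rw [comp]
  rw [takeWhile_sorted_eq_filter (by rw [sortF]; exact (Finset.sortedLT_sort S).pairwise) hj']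
  rw [show (fun k => decide (k < j)) = (fun k => decide ((· < j) k)) from rfl]
  rw [sum_filter_sort p S (· < j)]
  have : S.filter (· ≤ j) = insert j (S.filter (· < j)) := by
    ext i
    simp only [Finset.mem_filter, Finset.mem_insert]
    constructor
    · rintro ⟨hi, hle⟩
      rcases lt_or_eq_of_le hle with h|h
      · exact Or.inr ⟨hi, h⟩
      · exact Or.inl h
    · rintro (rfl|⟨hi, hlt⟩)
      · exact ⟨hj, le_refl _⟩
      · exact ⟨hi, le_of_lt hlt⟩
  rw [this, Finset.sum_insert (by simp)]
  ring

lemma sum_sortF (p : Fin n → ℕ) (S : Finset (Fin n)) :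
    ((sortF S).map p).sum = ∑ i ∈ S, p i := by
  simp only [sortF]
  rw [← List.sum_toFinset _ (Finset.sort_nodup S _)]
  congr 1
  ext i
  simp [sortF]

lemma mem_sortF {S : Finset (Fin n)} {j : Fin n} : j ∈ sortF S ↔ j ∈ S := by
  simp [sortF]

section FB

variable (Jr : Finset (Fin n)) (hJr : Jr.Nonempty) (X Y : Finset (Fin n))

/-- middle block of `σ_{X,Y}` -/
def midS : Finset (Fin n) :=
  (Finset.Icc (Jr.min' hJr) (Jr.max' hJr)) \ (X ∪ Y)

lemma fiveBlock_eq :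
    fiveBlock Jr hJr X Y = sortF (Finset.Iio (Jr.min' hJr)) ++ (sortF X ++
      (sortF (midS Jr hJr X Y) ++ (sortF Y ++ sortF (Finset.Ioi (Jr.max' hJr))))) := by
  simp [fiveBlock, midS, List.append_assoc]

variable {Jr hJr X Y}

lemma Hset_subset_Icc : Hset Jr hJr ⊆ Finset.Icc (Jr.min' hJr) (Jr.max' hJr) :=
  Finset.sdiff_subset

lemma lt_of_mem_Hset {j : Fin n} (hj : j ∈ Hset Jr hJr) :
    Jr.min' hJr < j ∧ j < Jr.max' hJr := by
  have h1 := Finset.mem_Icc.1 (Hset_subset_Icc hj)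
  have h2 : j ∉ Jr := (Finset.mem_sdiff.1 hj).2
  constructor
  · exact lt_of_le_of_ne h1.1 (fun h => h2 (h ▸ Jr.min'_mem hJr))
  · exact lt_of_le_of_ne h1.2 (fun h => h2 (h ▸ Jr.max'_mem hJr))

lemma midS_subset_Icc : midS Jr hJr X Y ⊆ Finset.Icc (Jr.min' hJr) (Jr.max' hJr) :=
  Finset.sdiff_subset

lemma Jr_subset_midS (hX : X ⊆ Hset Jr hJr) (hY : Y ⊆ Hset Jr hJr) :
    Jr ⊆ midS Jr hJr X Y := by
  intro j hj
  refine Finset.mem_sdiff.2 ⟨Finset.mem_Icc.2 ⟨Jr.min'_le j hj, Jr.le_max' j hj⟩, ?_⟩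
  intro hmem
  rcases Finset.mem_union.1 hmem with h|h
  · exact (Finset.mem_sdiff.1 (hX h)).2 hj
  · exact (Finset.mem_sdiff.1 (hY h)).2 hj

section comps
variable (p : Fin n → ℕ)

lemma comp_fb_B1 {j : Fin n} (hj : j ∈ Finset.Iio (Jr.min' hJr)) :
    comp p (fiveBlock Jr hJr X Y) j
      = ∑ i ∈ (Finset.Iio (Jr.min' hJr)).filter (· ≤ j), p i := by
  rw [fiveBlock_eq, comp_append_of_mem p _ (mem_sortF.2 hj), comp_sortF p hj]

lemma comp_fb_X (hX : X ⊆ Hset Jr hJr) {j : Fin n} (hj : j ∈ X) :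
    comp p (fiveBlock Jr hJr X Y) j
      = ∑ i ∈ Finset.Iio (Jr.min' hJr), p i + ∑ i ∈ X.filter (· ≤ j), p i := by
  have h1 : j ∉ Finset.Iio (Jr.min' hJr) := by
    simp only [Finset.mem_Iio, not_lt]
    exact le_of_lt (lt_of_mem_Hset (hX hj)).1
  rw [fiveBlock_eq, comp_append_of_not_mem p _ (fun h => h1 (mem_sortF.1 h)),
    comp_append_of_mem p _ (mem_sortF.2 hj), comp_sortF p hj, sum_sortF]

lemma comp_fb_mid {j : Fin n} (hj : j ∈ midS Jr hJr X Y) :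
    comp p (fiveBlock Jr hJr X Y) j
      = ∑ i ∈ Finset.Iio (Jr.min' hJr), p i + ∑ i ∈ X, p i
        + ∑ i ∈ (midS Jr hJr X Y).filter (· ≤ j), p i := by
  have hIcc := Finset.mem_Icc.1 (midS_subset_Icc hj)
  have h1 : j ∉ Finset.Iio (Jr.min' hJr) := by
    simp only [Finset.mem_Iio, not_lt]; exact hIcc.1
  have h2 : j ∉ X := fun h => (Finset.mem_sdiff.1 hj).2 (Finset.mem_union_left _ h)
  rw [fiveBlock_eq, comp_append_of_not_mem p _ (fun h => h1 (mem_sortF.1 h)),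
    comp_append_of_not_mem p _ (fun h => h2 (mem_sortF.1 h)),
    comp_append_of_mem p _ (mem_sortF.2 hj), comp_sortF p hj, sum_sortF, sum_sortF]
  ring

lemma comp_fb_Y (hY : Y ⊆ Hset Jr hJr) (hXY : Disjoint X Y) {j : Fin n} (hj : j ∈ Y) :
    comp p (fiveBlock Jr hJr X Y) j
      = ∑ i ∈ Finset.Iio (Jr.min' hJr), p i + ∑ i ∈ X, p i
        + ∑ i ∈ midS Jr hJr X Y, p i + ∑ i ∈ Y.filter (· ≤ j), p i := by
  have h1 : j ∉ Finset.Iio (Jr.min' hJr) := by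
    simp only [Finset.mem_Iio, not_lt]
    exact le_of_lt (lt_of_mem_Hset (hY hj)).1
  have h2 : j ∉ X := (Finset.disjoint_right.1 hXY) hj
  have h3 : j ∉ midS Jr hJr X Y := fun h =>
    (Finset.mem_sdiff.1 h).2 (Finset.mem_union_right _ hj)
  rw [fiveBlock_eq, comp_append_of_not_mem p _ (fun h => h1 (mem_sortF.1 h)),
    comp_append_of_not_mem p _ (fun h => h2 (mem_sortF.1 h)),
    comp_append_of_not_mem p _ (fun h => h3 (mem_sortF.1 h)),
    comp_append_of_mem p _ (mem_sortF.2 hj), comp_sortF p hj, sum_sortF, sum_sortF, sum_sortF]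
  ring

lemma comp_fb_B5 (hX : X ⊆ Hset Jr hJr) (hY : Y ⊆ Hset Jr hJr) {j : Fin n}
    (hj : j ∈ Finset.Ioi (Jr.max' hJr)) :
    comp p (fiveBlock Jr hJr X Y) j
      = ∑ i ∈ Finset.Iio (Jr.min' hJr), p i + ∑ i ∈ X, p i
        + ∑ i ∈ midS Jr hJr X Y, p i + ∑ i ∈ Y, p i
        + ∑ i ∈ (Finset.Ioi (Jr.max' hJr)).filter (· ≤ j), p i := by
  have hβj : Jr.max' hJr < j := Finset.mem_Ioi.1 hj
  have hαβ : Jr.min' hJr ≤ Jr.max' hJr := Jr.min'_le _ (Jr.max'_mem hJr)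
  have h1 : j ∉ Finset.Iio (Jr.min' hJr) := by
    simp only [Finset.mem_Iio, not_lt]
    exact le_of_lt (lt_of_le_of_lt hαβ hβj)
  have h2 : j ∉ X := fun h => absurd (lt_of_mem_Hset (hX h)).2 (not_lt.2 (le_of_lt hβj))
  have h3 : j ∉ midS Jr hJr X Y := fun h =>
    absurd (Finset.mem_Icc.1 (midS_subset_Icc h)).2 (not_le.2 hβj)
  have h4 : j ∉ Y := fun h => absurd (lt_of_mem_Hset (hY h)).2 (not_lt.2 (le_of_lt hβj))
  rw [fiveBlock_eq, comp_append_of_not_mem p _ (fun h => h1 (mem_sortF.1 h)),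
    comp_append_of_not_mem p _ (fun h => h2 (mem_sortF.1 h)),
    comp_append_of_not_mem p _ (fun h => h3 (mem_sortF.1 h)),
    comp_append_of_not_mem p _ (fun h => h4 (mem_sortF.1 h)),
    comp_sortF p (Finset.mem_Ioi.2 hβj), sum_sortF, sum_sortF, sum_sortF, sum_sortF]
  ring


end comps
lemma block_cases (j : Fin n) :
    j ∈ Finset.Iio (Jr.min' hJr) ∨ j ∈ X ∨ j ∈ midS Jr hJr X Y ∨ j ∈ Y ∨
      j ∈ Finset.Ioi (Jr.max' hJr) := by
  by_cases h1 : j < Jr.min' hJr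
  · exact Or.inl (Finset.mem_Iio.2 h1)
  by_cases h5 : Jr.max' hJr < j
  · exact Or.inr (Or.inr (Or.inr (Or.inr (Finset.mem_Ioi.2 h5))))
  by_cases h2 : j ∈ X
  · exact Or.inr (Or.inl h2)
  by_cases h4 : j ∈ Y
  · exact Or.inr (Or.inr (Or.inr (Or.inl h4)))
  refine Or.inr (Or.inr (Or.inl ?_))
  refine Finset.mem_sdiff.2 ⟨Finset.mem_Icc.2 ⟨not_lt.1 h1, not_lt.1 h5⟩, ?_⟩
  intro h
  rcases Finset.mem_union.1 h with h|h
  · exact h2 h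
  · exact h4 h

lemma fiveBlock_isSchedule (hX : X ⊆ Hset Jr hJr) (hY : Y ⊆ Hset Jr hJr)
    (hXY : Disjoint X Y) : IsSchedule (fiveBlock Jr hJr X Y) := by
  have hαβ : Jr.min' hJr ≤ Jr.max' hJr := Jr.min'_le _ (Jr.max'_mem hJr)
  apply List.perm_of_nodup_nodup_toFinset_eq ?_ (List.nodup_finRange n)
  · rw [List.toFinset_finRange]
    apply Finset.eq_univ_of_forall
    intro j
    rw [List.mem_toFinset, fiveBlock_eq]
    simp only [List.mem_append, mem_sortF]
    rcases block_cases (X := X) (Y := Y) (hJr := hJr) j with h|h|h|h|h <;> tauto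
  · rw [fiveBlock_eq]
    -- memberships to bounds
    have mB1 : ∀ i ∈ Finset.Iio (Jr.min' hJr), i < Jr.min' hJr := fun i hi => Finset.mem_Iio.1 hi
    have mB5 : ∀ i ∈ Finset.Ioi (Jr.max' hJr), Jr.max' hJr < i := fun i hi => Finset.mem_Ioi.1 hi
    have mIccm : ∀ i ∈ midS Jr hJr X Y, Jr.min' hJr ≤ i ∧ i ≤ Jr.max' hJr :=
      fun i hi => Finset.mem_Icc.1 (midS_subset_Icc hi)
    have mX : ∀ i ∈ X, Jr.min' hJr < i ∧ i < Jr.max' hJr := fun i hi => lt_of_mem_Hset (hX hi)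
    have mY : ∀ i ∈ Y, Jr.min' hJr < i ∧ i < Jr.max' hJr := fun i hi => lt_of_mem_Hset (hY hi)
    refine List.Nodup.append (Finset.sort_nodup _ _) ?_ ?_
    · refine List.Nodup.append (Finset.sort_nodup _ _) ?_ ?_
      · refine List.Nodup.append (Finset.sort_nodup _ _) ?_ ?_
        · refine List.Nodup.append (Finset.sort_nodup _ _) (Finset.sort_nodup _ _) ?_
          intro a ha hb
          rw [mem_sortF] at ha hb
          exact absurd (mB5 a hb) (not_lt.2 (le_of_lt (mY a ha).2))
        · intro a ha hb
          rw [mem_sortF] at ha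
          simp only [List.mem_append, mem_sortF] at hb
          have hm := mIccm a ha
          rcases hb with hb|hb
          · exact (Finset.mem_sdiff.1 ha).2 (Finset.mem_union_right _ hb)
          · exact absurd (mB5 a hb) (not_lt.2 hm.2)
      · intro a ha hb
        rw [mem_sortF] at ha
        simp only [List.mem_append, mem_sortF] at hb
        have hm := mX a ha
        rcases hb with hb|hb|hb
        · exact (Finset.mem_sdiff.1 hb).2 (Finset.mem_union_left _ ha)
        · exact (Finset.disjoint_left.1 hXY ha) hb
        · exact absurd (mB5 a hb) (not_lt.2 (le_of_lt hm.2))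
    · intro a ha hb
      rw [mem_sortF] at ha
      simp only [List.mem_append, mem_sortF] at hb
      have haα := mB1 a ha
      rcases hb with hb|hb|hb|hb
      · exact absurd (mX a hb).1 (not_lt.2 (le_of_lt haα))
      · exact absurd (mIccm a hb).1 (not_le.2 haα)
      · exact absurd (mY a hb).1 (not_lt.2 (le_of_lt haα))
      · exact absurd (mB5 a hb) (not_lt.2 (le_of_lt (lt_of_lt_of_le haα hαβ)))
/-- rent of the five-block schedule is at most the total load of the middle block -/
lemma rent_fb_le (p : Fin n → ℕ) (hX : X ⊆ Hset Jr hJr) (hY : Y ⊆ Hset Jr hJr) :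
    rent p Jr hJr (fiveBlock Jr hJr X Y) ≤ (∑ i ∈ midS Jr hJr X Y, p i : ℤ) := by
  have hJmid := Jr_subset_midS hX hY
  have hsup : (Jr.sup' hJr fun j => (comp p (fiveBlock Jr hJr X Y) j : ℤ))
      ≤ ((∑ i ∈ Finset.Iio (Jr.min' hJr), p i + ∑ i ∈ X, p i
        + ∑ i ∈ midS Jr hJr X Y, p i : ℕ) : ℤ) := by
    apply Finset.sup'_le
    intro j hj
    rw [comp_fb_mid p (hJmid hj)]
    have : ∑ i ∈ (midS Jr hJr X Y).filter (· ≤ j), p i ≤ ∑ i ∈ midS Jr hJr X Y, p i :=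
      Finset.sum_le_sum_of_subset (Finset.filter_subset _ _)
    exact_mod_cast by omega
  have hinf : ((∑ i ∈ Finset.Iio (Jr.min' hJr), p i + ∑ i ∈ X, p i : ℕ) : ℤ)
      ≤ Jr.inf' hJr fun j => (comp p (fiveBlock Jr hJr X Y) j : ℤ) - p j := by
    apply Finset.le_inf'
    intro j hj
    rw [comp_fb_mid p (hJmid hj)]
    have : p j ≤ ∑ i ∈ (midS Jr hJr X Y).filter (· ≤ j), p i :=
      Finset.single_le_sum (fun i _ => Nat.zero_le (p i))
        (Finset.mem_filter.2 ⟨hJmid hj, le_refl j⟩)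
    have h2 : (∑ i ∈ Finset.Iio (Jr.min' hJr), p i + ∑ i ∈ X, p i) + p j
        ≤ ∑ i ∈ Finset.Iio (Jr.min' hJr), p i + ∑ i ∈ X, p i
          + ∑ i ∈ (midS Jr hJr X Y).filter (· ≤ j), p i := by omega
    have := (Nat.cast_le (α := ℤ)).2 h2
    push_cast at this ⊢
    omega
  rw [rent]
  push_cast at hsup hinf ⊢
  omega

/-- prefix-domination principle -/
lemma Lmax_le_of_PD (p : Fin n → ℕ) (d : Fin n → ℤ)
    (hne : (Finset.univ : Finset (Fin n)).Nonempty) {l₁ l₂ : List (Fin n)}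
    (h : ∀ j : Fin n, ∃ m : Fin n, d m ≤ d j ∧ comp p l₂ j ≤ comp p l₁ m) :
    Lmax p d hne l₂ ≤ Lmax p d hne l₁ := by
  apply Finset.sup'_le
  intro j _
  obtain ⟨m, hdm, hcm⟩ := h j
  calc (comp p l₂ j : ℤ) - d j ≤ (comp p l₁ m : ℤ) - d m := by
        have := (Nat.cast_le (α := ℤ)).2 hcm
        omega
    _ ≤ Lmax p d hne l₁ := by
        exact Finset.le_sup' (fun j => (comp p l₁ j : ℤ) - d j) (Finset.mem_univ m)
/-- moving `x` from `X` to `Y` when some `y ∈ Y` is below `x` -/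
lemma move_lemma (p : Fin n → ℕ) (d : Fin n → ℤ) (hd : Monotone d)
    (hne : (Finset.univ : Finset (Fin n)).Nonempty)
    (hX : X ⊆ Hset Jr hJr) (hY : Y ⊆ Hset Jr hJr) (hXY : Disjoint X Y)
    {x : Fin n} (hx : x ∈ X) {y : Fin n} (hy : y ∈ Y) (hyx : y < x) :
    Lmax p d hne (fiveBlock Jr hJr (X.erase x) (insert x Y))
      ≤ Lmax p d hne (fiveBlock Jr hJr X Y) := by
  set X' := X.erase x with hX'def
  set Y' := insert x Y with hY'def
  have hxny : x ∉ Y := Finset.disjoint_left.1 hXY hx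
  have hX' : X' ⊆ Hset Jr hJr := (Finset.erase_subset _ _).trans hX
  have hY' : Y' ⊆ Hset Jr hJr := Finset.insert_subset (hX hx) hY
  have hXY' : Disjoint X' Y' := by
    rw [Finset.disjoint_left]
    intro a ha hay
    rcases Finset.mem_insert.1 hay with rfl|hay
    · exact (Finset.mem_erase.1 ha).1 rfl
    · exact Finset.disjoint_left.1 hXY (Finset.mem_erase.1 ha).2 hay
  have hunion : X' ∪ Y' = X ∪ Y := by
    ext i
    simp only [Finset.mem_union, hX'def, hY'def, Finset.mem_erase, Finset.mem_insert]
    constructor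
    · rintro (⟨_, h⟩|(rfl|h))
      · exact Or.inl h
      · exact Or.inl hx
      · exact Or.inr h
    · rintro (h|h)
      · by_cases hix : i = x
        · exact Or.inr (Or.inl hix)
        · exact Or.inl ⟨hix, h⟩
      · exact Or.inr (Or.inr h)
  have hmid : midS Jr hJr X' Y' = midS Jr hJr X Y := by
    rw [midS, midS, hunion]
  have hsumX : ∑ i ∈ X, p i = ∑ i ∈ X', p i + p x := by
    rw [hX'def, Finset.sum_erase_add _ _ hx]
  -- the max element of Y below x
  have hYlt : (Y.filter (· < x)).Nonempty := ⟨y, Finset.mem_filter.2 ⟨hy, hyx⟩⟩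
  set q := (Y.filter (· < x)).max' hYlt with hqdef
  have hqY : q ∈ Y := (Finset.mem_filter.1 ((Y.filter (· < x)).max'_mem hYlt)).1
  have hqx : q < x := (Finset.mem_filter.1 ((Y.filter (· < x)).max'_mem hYlt)).2
  have hfilt : Y.filter (· < x) = Y.filter (· ≤ q) := by
    ext i
    simp only [Finset.mem_filter]
    constructor
    · rintro ⟨hi, hlt⟩
      exact ⟨hi, Finset.le_max' (Y.filter (· < x)) i (Finset.mem_filter.2 ⟨hi, hlt⟩)⟩
    · rintro ⟨hi, hle⟩
      exact ⟨hi, lt_of_le_of_lt hle hqx⟩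
  apply Lmax_le_of_PD
  intro j
  rcases block_cases (X := X') (Y := Y') (hJr := hJr) j with hj|hj|hj|hj|hj
  · exact ⟨j, le_refl _, by rw [comp_fb_B1 p hj, comp_fb_B1 p hj]⟩
  · -- j ∈ X'
    have hjX : j ∈ X := (Finset.mem_erase.1 hj).2
    refine ⟨j, le_refl _, ?_⟩
    rw [comp_fb_X p hX' hj, comp_fb_X p hX hjX]
    have : ∑ i ∈ X'.filter (· ≤ j), p i ≤ ∑ i ∈ X.filter (· ≤ j), p i :=
      Finset.sum_le_sum_of_subset (Finset.filter_subset_filter _ (Finset.erase_subset _ _))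
    omega
  · -- j ∈ mid
    rw [hmid] at hj
    refine ⟨j, le_refl _, ?_⟩
    rw [comp_fb_mid p (hmid ▸ hj), comp_fb_mid p hj, hmid]
    have : ∑ i ∈ X', p i ≤ ∑ i ∈ X, p i :=
      Finset.sum_le_sum_of_subset (Finset.erase_subset _ _)
    omega
  · -- j ∈ Y'
    rcases Finset.mem_insert.1 hj with heq|hjY
    · -- j = x : compare with q
      subst heq
      refine ⟨q, hd (le_of_lt hqx), ?_⟩
      rw [comp_fb_Y p hY' hXY' hj, comp_fb_Y p hY hXY hqY, hmid]
      have hYx : Y'.filter (· ≤ j) = insert j (Y.filter (· ≤ q)) := by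
        rw [← hfilt]
        ext i
        simp only [hY'def, Finset.mem_filter, Finset.mem_insert]
        constructor
        · rintro ⟨(rfl|hiY), hle⟩
          · exact Or.inl rfl
          · exact Or.inr ⟨hiY, lt_of_le_of_ne hle (by rintro rfl; exact hxny hiY)⟩
        · rintro (rfl|⟨hiY, hlt⟩)
          · exact ⟨Or.inl rfl, le_refl _⟩
          · exact ⟨Or.inr hiY, le_of_lt hlt⟩
      have hjq : j ∉ Y.filter (· ≤ q) := by
        rw [← hfilt]
        simp [hxny]
      rw [hYx, Finset.sum_insert hjq]
      omega
    · -- j ∈ Y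
      refine ⟨j, le_refl _, ?_⟩
      rw [comp_fb_Y p hY' hXY' hj, comp_fb_Y p hY hXY hjY, hmid]
      have hsub : Y'.filter (· ≤ j) ⊆ insert x (Y.filter (· ≤ j)) := by
        intro i hi
        rcases Finset.mem_insert.1 (Finset.filter_subset _ _ hi) with rfl|hiY
        · exact Finset.mem_insert_self _ _
        · exact Finset.mem_insert_of_mem
            (Finset.mem_filter.2 ⟨hiY, (Finset.mem_filter.1 hi).2⟩)
      have h1 : ∑ i ∈ Y'.filter (· ≤ j), p i ≤ p x + ∑ i ∈ Y.filter (· ≤ j), p i := by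
        calc ∑ i ∈ Y'.filter (· ≤ j), p i ≤ ∑ i ∈ insert x (Y.filter (· ≤ j)), p i :=
              Finset.sum_le_sum_of_subset hsub
          _ ≤ p x + ∑ i ∈ Y.filter (· ≤ j), p i := by
              rw [Finset.sum_insert (by simp [hxny])]
      omega
  · -- j ∈ B5
    refine ⟨j, le_refl _, ?_⟩
    rw [comp_fb_B5 p hX' hY' hj, comp_fb_B5 p hX hY hj, hmid]
    have hsumY : ∑ i ∈ Y', p i = p x + ∑ i ∈ Y, p i := by
      rw [hY'def, Finset.sum_insert hxny]
    omega
lemma extract_lemma (p : Fin n → ℕ) (d : Fin n → ℤ) (hd : Monotone d)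
    (hne : (Finset.univ : Finset (Fin n)).Nonempty)
    {l : List (Fin n)} (hl : IsSchedule l) :
    ∃ X Y : Finset (Fin n), X ⊆ Hset Jr hJr ∧ Y ⊆ Hset Jr hJr ∧ Disjoint X Y ∧
      ((∑ i ∈ midS Jr hJr X Y, p i : ℕ) : ℤ) ≤ rent p Jr hJr l ∧
      Lmax p d hne (fiveBlock Jr hJr X Y) ≤ Lmax p d hne l := by
  classical
  set α := Jr.min' hJr with hα
  set β := Jr.max' hJr with hβ
  set idx := fun i : Fin n => l.idxOf i with hidx
  have hidx' : ∀ i : Fin n, l.idxOf i = idx i := fun i => rfl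
  set pmin := Jr.inf' hJr idx with hpmin
  set pmax := Jr.sup' hJr idx with hpmax
  have hpmm : pmin ≤ pmax := by
    obtain ⟨j0, hj0⟩ := hJr
    exact le_trans (Finset.inf'_le idx hj0) (Finset.le_sup' idx hj0)
  set X₀ := (Hset Jr hJr).filter (fun i => idx i < pmin) with hX₀
  set Y₀ := (Hset Jr hJr).filter (fun i => pmax < idx i) with hY₀
  have hXs : X₀ ⊆ Hset Jr hJr := Finset.filter_subset _ _
  have hYs : Y₀ ⊆ Hset Jr hJr := Finset.filter_subset _ _
  have hXY : Disjoint X₀ Y₀ := by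
    rw [Finset.disjoint_left]
    intro a ha hb
    have h1 := (Finset.mem_filter.1 ha).2
    have h2 := (Finset.mem_filter.1 hb).2
    omega
  set mid := midS Jr hJr X₀ Y₀ with hmid
  set Bf := Finset.univ.filter (fun i => pmin ≤ idx i ∧ idx i ≤ pmax) with hBf
  have hmidB : mid ⊆ Bf := by
    intro i hi
    obtain ⟨hIcc, hnot⟩ := Finset.mem_sdiff.1 hi
    refine Finset.mem_filter.2 ⟨Finset.mem_univ _, ?_⟩
    by_cases hiJr : i ∈ Jr
    · exact ⟨Finset.inf'_le idx hiJr, Finset.le_sup' idx hiJr⟩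
    · have hiH : i ∈ Hset Jr hJr := Finset.mem_sdiff.2 ⟨hIcc, hiJr⟩
      constructor
      · by_contra hc
        exact hnot (Finset.mem_union_left _ (Finset.mem_filter.2 ⟨hiH, by omega⟩))
      · by_contra hc
        exact hnot (Finset.mem_union_right _ (Finset.mem_filter.2 ⟨hiH, by omega⟩))
  -- rent lower bound
  have hrent : ((∑ i ∈ Bf, p i : ℕ) : ℤ) ≤ rent p Jr hJr l := by
    obtain ⟨jM, hjM, hjMe⟩ := Finset.exists_mem_eq_sup' hJr idx
    obtain ⟨jm, hjm, hjme⟩ := Finset.exists_mem_eq_inf' hJr idx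
    have hpM : pmax = idx jM := hjMe
    have hpm : pmin = idx jm := hjme
    have hCM : comp p l jM = ∑ i ∈ Finset.univ.filter (fun i => idx i ≤ pmax), p i := by
      rw [comp_schedule p hl jM]
      congr 1
      ext i
      simp only [Pl, Finset.mem_filter, Finset.mem_univ, true_and, hidx']
      omega
    have hCm : comp p l jm
        = p jm + ∑ i ∈ Finset.univ.filter (fun i => idx i < pmin), p i := by
      rw [comp_schedule p hl jm]
      have : Pl l jm = insert jm (Finset.univ.filter (fun i => idx i < pmin)) := by
        ext i
        simp only [Pl, Finset.mem_filter, Finset.mem_univ, true_and, Finset.mem_insert, hidx']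
        constructor
        · intro hle
          rcases lt_or_eq_of_le hle with h|h
          · exact Or.inr (by omega)
          · exact Or.inl ((List.idxOf_inj (isSchedule_mem hl i)).1 (by rw [hidx', hidx']; omega))
        · rintro (rfl|h)
          · omega
          · omega
      rw [this, Finset.sum_insert (by simp; omega)]
    have hsub : Finset.univ.filter (fun i => idx i < pmin)
        ⊆ Finset.univ.filter (fun i => idx i ≤ pmax) := by
      intro i hi
      simp only [Finset.mem_filter, Finset.mem_univ, true_and] at *
      omega
    have hsd : Finset.univ.filter (fun i => idx i ≤ pmax)
        \ Finset.univ.filter (fun i => idx i < pmin) = Bf := by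
      ext i
      simp only [Finset.mem_sdiff, Finset.mem_filter, Finset.mem_univ, true_and, hBf]
      omega
    have hsplit : ∑ i ∈ Finset.univ.filter (fun i => idx i ≤ pmax), p i
        = ∑ i ∈ Bf, p i + ∑ i ∈ Finset.univ.filter (fun i => idx i < pmin), p i := by
      rw [← Finset.sum_sdiff hsub, hsd]
    have h1 : (comp p l jM : ℤ) ≤ Jr.sup' hJr fun j => (comp p l j : ℤ) :=
      Finset.le_sup' (fun j => (comp p l j : ℤ)) hjM
    have h2 : (Jr.inf' hJr fun j => (comp p l j : ℤ) - p j) ≤ (comp p l jm : ℤ) - p jm :=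
      Finset.inf'_le _ hjm
    rw [rent]
    have : (comp p l jM : ℤ) - ((comp p l jm : ℤ) - p jm) = ((∑ i ∈ Bf, p i : ℕ) : ℤ) := by
      rw [hCM, hCm, hsplit]
      push_cast
      ring
    omega
  refine ⟨X₀, Y₀, hXs, hYs, hXY, ?_, ?_⟩
  · calc ((∑ i ∈ mid, p i : ℕ) : ℤ) ≤ ((∑ i ∈ Bf, p i : ℕ) : ℤ) := by
          exact_mod_cast Finset.sum_le_sum_of_subset hmidB
      _ ≤ rent p Jr hJr l := hrent
  · apply Lmax_le_of_PD
    intro j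
    -- generic step
    have key : ∀ (P : Finset (Fin n)), j ∈ P → (∀ i ∈ P, i ≤ j ∨ idx i < idx j) →
        comp p (fiveBlock Jr hJr X₀ Y₀) j ≤ ∑ i ∈ P, p i →
        ∃ m : Fin n, d m ≤ d j ∧ comp p (fiveBlock Jr hJr X₀ Y₀) j ≤ comp p l m := by
      intro P hjP hprop hcomp
      obtain ⟨m, hmP, hmax⟩ := Finset.exists_max_image P idx ⟨j, hjP⟩
      have hmj : m ≤ j := by
        rcases hprop m hmP with h|h
        · exact h
        · exact absurd (hmax j hjP) (by omega)
      refine ⟨m, hd hmj, le_trans hcomp (le_trans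
        (Finset.sum_le_sum_of_subset ?_) (le_of_eq (comp_schedule p hl m).symm))⟩
      intro i hi
      simp only [Pl, Finset.mem_filter, Finset.mem_univ, true_and]
      exact hmax i hi
    have hmemH : ∀ i ∈ Hset Jr hJr, α < i ∧ i < β := fun i hi => lt_of_mem_Hset hi
    rcases block_cases (X := X₀) (Y := Y₀) (hJr := hJr) j with hj|hj|hj|hj|hj
    · -- B1
      refine key ((Finset.Iio α).filter (· ≤ j))
        (Finset.mem_filter.2 ⟨hj, le_refl j⟩)
        (fun i hi => Or.inl (Finset.mem_filter.1 hi).2)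
        (le_of_eq (comp_fb_B1 p hj))
      
    · -- X₀
      have hαj : α < j := (hmemH j (hXs hj)).1
      have hdisj : Disjoint (Finset.Iio α) (X₀.filter (· ≤ j)) := by
        rw [Finset.disjoint_left]
        intro a ha hb
        have := (hmemH a (hXs (Finset.filter_subset _ _ hb))).1
        have := Finset.mem_Iio.1 ha
        omega
      refine key (Finset.Iio α ∪ X₀.filter (· ≤ j))
        (Finset.mem_union_right _ (Finset.mem_filter.2 ⟨hj, le_refl j⟩)) ?_ ?_
      · intro i hi
        rcases Finset.mem_union.1 hi with h|h
        · exact Or.inl (le_of_lt (lt_of_lt_of_le (Finset.mem_Iio.1 h) (le_of_lt hαj)))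
        · exact Or.inl (Finset.mem_filter.1 h).2
      · rw [Finset.sum_union hdisj]
        exact le_of_eq (comp_fb_X p hXs hj)
    · -- mid
      have hjB := hmidB hj
      have hjBf := (Finset.mem_filter.1 hjB).2
      have hjIcc := Finset.mem_Icc.1 (midS_subset_Icc hj)
      have d1 : Disjoint (Finset.Iio α) X₀ := by
        rw [Finset.disjoint_left]
        intro a ha hb
        have := (hmemH a (hXs hb)).1
        have := Finset.mem_Iio.1 ha
        omega
      have d2 : Disjoint (Finset.Iio α ∪ X₀) (mid.filter (· ≤ j)) := by
        rw [Finset.disjoint_left]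
        intro a ha hb
        have hamid := Finset.filter_subset _ _ hb
        have haIcc := Finset.mem_Icc.1 (midS_subset_Icc hamid)
        rcases Finset.mem_union.1 ha with h|h
        · have := Finset.mem_Iio.1 h
          omega
        · exact (Finset.mem_sdiff.1 hamid).2 (Finset.mem_union_left _ h)
      refine key (Finset.Iio α ∪ X₀ ∪ mid.filter (· ≤ j))
        (Finset.mem_union_right _ (Finset.mem_filter.2 ⟨hj, le_refl j⟩)) ?_ ?_
      · intro i hi
        rcases Finset.mem_union.1 hi with h|h
        · rcases Finset.mem_union.1 h with h'|h'
          · exact Or.inl (le_of_lt (lt_of_lt_of_le (Finset.mem_Iio.1 h') hjIcc.1))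
          · refine Or.inr ?_
            have := (Finset.mem_filter.1 h').2
            omega
        · exact Or.inl (Finset.mem_filter.1 h).2
      · rw [Finset.sum_union d2, Finset.sum_union d1]
        exact le_of_eq (comp_fb_mid p hj)
    · -- Y₀
      have hjH := hYs hj
      have hαj : α < j := (hmemH j hjH).1
      have hjidx := (Finset.mem_filter.1 hj).2
      have d1 : Disjoint (Finset.Iio α) X₀ := by
        rw [Finset.disjoint_left]
        intro a ha hb
        have := (hmemH a (hXs hb)).1
        have := Finset.mem_Iio.1 ha
        omega
      have d2 : Disjoint (Finset.Iio α ∪ X₀) mid := by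
        rw [Finset.disjoint_left]
        intro a ha hb
        have haIcc := Finset.mem_Icc.1 (midS_subset_Icc hb)
        rcases Finset.mem_union.1 ha with h|h
        · have := Finset.mem_Iio.1 h
          omega
        · exact (Finset.mem_sdiff.1 hb).2 (Finset.mem_union_left _ h)
      have d3 : Disjoint (Finset.Iio α ∪ X₀ ∪ mid) (Y₀.filter (· ≤ j)) := by
        rw [Finset.disjoint_left]
        intro a ha hb
        have haY := Finset.filter_subset _ _ hb
        rcases Finset.mem_union.1 ha with h|h
        · rcases Finset.mem_union.1 h with h'|h'
          · have := (hmemH a (hYs haY)).1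
            have := Finset.mem_Iio.1 h'
            omega
          · exact Finset.disjoint_left.1 hXY h' haY
        · exact (Finset.mem_sdiff.1 h).2 (Finset.mem_union_right _ haY)
      refine key (Finset.Iio α ∪ X₀ ∪ mid ∪ Y₀.filter (· ≤ j))
        (Finset.mem_union_right _ (Finset.mem_filter.2 ⟨hj, le_refl j⟩)) ?_ ?_
      · intro i hi
        rcases Finset.mem_union.1 hi with h|h
        · rcases Finset.mem_union.1 h with h'|h'
          · rcases Finset.mem_union.1 h' with h''|h''
            · exact Or.inl (le_of_lt (lt_of_lt_of_le (Finset.mem_Iio.1 h'') (le_of_lt hαj)))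
            · refine Or.inr ?_
              have := (Finset.mem_filter.1 h'').2
              omega
          · refine Or.inr ?_
            have := (Finset.mem_filter.1 (hmidB h')).2
            omega
        · exact Or.inl (Finset.mem_filter.1 h).2
      · rw [Finset.sum_union d3, Finset.sum_union d2, Finset.sum_union d1]
        exact le_of_eq (comp_fb_Y p hYs hXY hj)
    · -- B5
      have hβj : β < j := Finset.mem_Ioi.1 hj
      have hαβ : α ≤ β := Jr.min'_le _ (Jr.max'_mem hJr)
      have d1 : Disjoint (Finset.Iio α) X₀ := by
        rw [Finset.disjoint_left]
        intro a ha hb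
        have := (hmemH a (hXs hb)).1
        have := Finset.mem_Iio.1 ha
        omega
      have d2 : Disjoint (Finset.Iio α ∪ X₀) mid := by
        rw [Finset.disjoint_left]
        intro a ha hb
        have haIcc := Finset.mem_Icc.1 (midS_subset_Icc hb)
        rcases Finset.mem_union.1 ha with h|h
        · have := Finset.mem_Iio.1 h
          omega
        · exact (Finset.mem_sdiff.1 hb).2 (Finset.mem_union_left _ h)
      have d3 : Disjoint (Finset.Iio α ∪ X₀ ∪ mid) Y₀ := by
        rw [Finset.disjoint_left]
        intro a ha hb
        rcases Finset.mem_union.1 ha with h|h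
        · rcases Finset.mem_union.1 h with h'|h'
          · have := (hmemH a (hYs hb)).1
            have := Finset.mem_Iio.1 h'
            omega
          · exact Finset.disjoint_left.1 hXY h' hb
        · exact (Finset.mem_sdiff.1 h).2 (Finset.mem_union_right _ hb)
      have d4 : Disjoint (Finset.Iio α ∪ X₀ ∪ mid ∪ Y₀) ((Finset.Ioi β).filter (· ≤ j)) := by
        rw [Finset.disjoint_left]
        intro a ha hb
        have haβ : β < a := Finset.mem_Ioi.1 (Finset.filter_subset _ _ hb)
        rcases Finset.mem_union.1 ha with h|h
        · rcases Finset.mem_union.1 h with h'|h'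
          · rcases Finset.mem_union.1 h' with h''|h''
            · have := Finset.mem_Iio.1 h''
              omega
            · have := (hmemH a (hXs h'')).2
              omega
          · have := (Finset.mem_Icc.1 (midS_subset_Icc h')).2
            omega
        · have := (hmemH a (hYs h)).2
          omega
      refine key (Finset.Iio α ∪ X₀ ∪ mid ∪ Y₀ ∪ (Finset.Ioi β).filter (· ≤ j))
        (Finset.mem_union_right _ (Finset.mem_filter.2 ⟨hj, le_refl j⟩)) ?_ ?_
      · intro i hi
        refine Or.inl ?_
        rcases Finset.mem_union.1 hi with h|h
        · rcases Finset.mem_union.1 h with h'|h'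
          · rcases Finset.mem_union.1 h' with h''|h''
            · rcases Finset.mem_union.1 h'' with h3|h3
              · have := Finset.mem_Iio.1 h3
                omega
              · have := (hmemH i (hXs h3)).2
                omega
            · have := (Finset.mem_Icc.1 (midS_subset_Icc h'')).2
              omega
          · have := (hmemH i (hYs h')).2
            omega
        · exact (Finset.mem_filter.1 h).2
      · rw [Finset.sum_union d4, Finset.sum_union d3, Finset.sum_union d2, Finset.sum_union d1]
        exact le_of_eq (comp_fb_B5 p hXs hYs hj)
lemma make_ordered (p : Fin n → ℕ) (d : Fin n → ℤ) (hd : Monotone d)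
    (hne : (Finset.univ : Finset (Fin n)).Nonempty) :
    ∀ (k : ℕ) (X Y : Finset (Fin n)), X.card ≤ k →
    X ⊆ Hset Jr hJr → Y ⊆ Hset Jr hJr → Disjoint X Y →
    ∃ X' Y' : Finset (Fin n), X' ⊆ Hset Jr hJr ∧ Y' ⊆ Hset Jr hJr ∧ Disjoint X' Y' ∧
      (∀ x ∈ X', ∀ y ∈ Y', x < y) ∧ X' ∪ Y' = X ∪ Y ∧
      Lmax p d hne (fiveBlock Jr hJr X' Y') ≤ Lmax p d hne (fiveBlock Jr hJr X Y) := by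
  intro k
  induction k with
  | zero =>
    intro X Y hcard hX hY hXY
    have hXe : X = ∅ := Finset.card_eq_zero.1 (Nat.le_zero.1 hcard)
    subst hXe
    exact ⟨∅, Y, Finset.empty_subset _, hY, Finset.disjoint_empty_left _,
      fun x hx => absurd hx (Finset.notMem_empty x), rfl, le_refl _⟩
  | succ k ih =>
    intro X Y hcard hX hY hXY
    by_cases hord : ∀ x ∈ X, ∀ y ∈ Y, x < y
    · exact ⟨X, Y, hX, hY, hXY, hord, rfl, le_refl _⟩
    · push_neg at hord
      obtain ⟨x, hx, y, hy, hxy⟩ := hord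
      have hyx : y < x :=
        lt_of_le_of_ne hxy (fun h => Finset.disjoint_left.1 hXY (h ▸ hx) hy)
      have hxny : x ∉ Y := Finset.disjoint_left.1 hXY hx
      have hcard' : (X.erase x).card ≤ k := by
        have := Finset.card_erase_of_mem hx
        have hpos := Finset.card_pos.2 ⟨x, hx⟩
        omega
      have hX' : X.erase x ⊆ Hset Jr hJr := (Finset.erase_subset _ _).trans hX
      have hY' : insert x Y ⊆ Hset Jr hJr := Finset.insert_subset (hX hx) hY
      have hXY' : Disjoint (X.erase x) (insert x Y) := by
        rw [Finset.disjoint_left]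
        intro a ha hay
        rcases Finset.mem_insert.1 hay with rfl|hay
        · exact (Finset.mem_erase.1 ha).1 rfl
        · exact Finset.disjoint_left.1 hXY (Finset.mem_erase.1 ha).2 hay
      obtain ⟨X', Y', h1, h2, h3, h4, h5, h6⟩ := ih (X.erase x) (insert x Y) hcard' hX' hY' hXY'
      have hunion : X.erase x ∪ insert x Y = X ∪ Y := by
        ext i
        simp only [Finset.mem_union, Finset.mem_erase, Finset.mem_insert]
        constructor
        · rintro (⟨_, h⟩|(rfl|h))
          · exact Or.inl h
          · exact Or.inl hx
          · exact Or.inr h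
        · rintro (h|h)
          · by_cases hix : i = x
            · exact Or.inr (Or.inl hix)
            · exact Or.inl ⟨hix, h⟩
          · exact Or.inr (Or.inr h)
      exact ⟨X', Y', h1, h2, h3, h4, h5.trans hunion,
        h6.trans (move_lemma p d hd hne hX hY hXY hx hy hyx)⟩


end FB

/-- five-block structure for `1|er|max L_j`. For every instance
(jobs in EDD order) admitting a feasible sequence, there are `X*, Y* ⊆ H` with
`max X* < min Y*` such that the five-block sequence `σ_{X*,Y*}` is feasible and
minimizes the maximum lateness among all feasible sequences. -/
theorem stmt10 {n : ℕ} (p : Fin n → ℕ) (hp : ∀ j, 0 < p j)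
    (d : Fin n → ℤ) (hd : Monotone d)
    (hne : (Finset.univ : Finset (Fin n)).Nonempty)
    (Jr : Finset (Fin n)) (hJr : Jr.Nonempty) (Kr : ℤ)
    (hfeas : ∃ l : List (Fin n), IsSchedule l ∧ rent p Jr hJr l ≤ Kr) :
    ∃ X Y : Finset (Fin n), X ⊆ Hset Jr hJr ∧ Y ⊆ Hset Jr hJr ∧ Disjoint X Y ∧
      (∀ x ∈ X, ∀ y ∈ Y, x < y) ∧
      rent p Jr hJr (fiveBlock Jr hJr X Y) ≤ Kr ∧
      ∀ l : List (Fin n), IsSchedule l → rent p Jr hJr l ≤ Kr →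
        Lmax p d hne (fiveBlock Jr hJr X Y) ≤ Lmax p d hne l := by
  classical
  set F := ((List.finRange n).permutations).toFinset.filter
    (fun l => rent p Jr hJr l ≤ Kr) with hF
  have hmemF : ∀ l : List (Fin n), l ∈ F ↔ IsSchedule l ∧ rent p Jr hJr l ≤ Kr := by
    intro l
    simp only [hF, Finset.mem_filter, List.mem_toFinset, List.mem_permutations]
    rfl
  obtain ⟨l₀, hsch₀, hr₀⟩ := hfeas
  have hFne : F.Nonempty := ⟨l₀, (hmemF l₀).2 ⟨hsch₀, hr₀⟩⟩
  obtain ⟨ls, hlsF, hlsmin⟩ := Finset.exists_min_image F (Lmax p d hne) hFne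
  obtain ⟨hlssch, hlsrent⟩ := (hmemF ls).1 hlsF
  obtain ⟨X₀, Y₀, hX₀, hY₀, hXY₀, hrent₀, hL₀⟩ := extract_lemma p d hd hne hlssch
  obtain ⟨X', Y', h1, h2, h3, h4, h5, h6⟩ :=
    make_ordered p d hd hne X₀.card X₀ Y₀ (le_refl _) hX₀ hY₀ hXY₀
  have hmideq : midS Jr hJr X' Y' = midS Jr hJr X₀ Y₀ := by
    rw [midS, midS, h5]
  refine ⟨X', Y', h1, h2, h3, h4, ?_, ?_⟩
  · calc rent p Jr hJr (fiveBlock Jr hJr X' Y')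
        ≤ (∑ i ∈ midS Jr hJr X' Y', p i : ℤ) := rent_fb_le p h1 h2
      _ = ((∑ i ∈ midS Jr hJr X₀ Y₀, p i : ℕ) : ℤ) := by rw [hmideq]; push_cast; ring
      _ ≤ rent p Jr hJr ls := hrent₀
      _ ≤ Kr := hlsrent
  · intro l hsch hr
    calc Lmax p d hne (fiveBlock Jr hJr X' Y') ≤ Lmax p d hne (fiveBlock Jr hJr X₀ Y₀) := h6
      _ ≤ Lmax p d hne ls := hL₀
      _ ≤ Lmax p d hne l := hlsmin l ((hmemF l).2 ⟨hsch, hr⟩)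
end

section
/- For all X ⊆ H and κ ∈ J[α,β], the maximum of C_j^{σ_{X,∅}} − d_j over j ∈ J[α,κ−1] equals the maximum over j ∈ J[α,κ−1] \ X; i.e., jobs moved into the early block X never attain the maximum lateness strictly among J[α,κ−1] beyond what job α attains. -/
variable {n : ℕ}

lemma tw_eq (j : Fin n) (l₁ l₂ : List (Fin n)) (hj : j ∉ l₁) :
    (l₁ ++ j :: l₂).takeWhile (fun k => decide (k ≠ j)) = l₁ := by
  induction l₁ with
  | nil => simp [List.takeWhile_cons]
  | cons a t ih =>
    simp only [List.mem_cons, not_or] at hj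
    have : a ≠ j := Ne.symm hj.1
    simp [List.takeWhile_cons, this]
    simpa using ih hj.2

lemma comp_eq (p : Fin n → ℕ) (l₁ l₂ : List (Fin n)) (j : Fin n) (hj : j ∉ l₁) :
    comp p (l₁ ++ j :: l₂) j = (l₁.map p).sum + p j := by
  unfold comp; rw [tw_eq j l₁ l₂ hj]

lemma comp_le (p : Fin n → ℕ) (l₁ l₂ l₃ : List (Fin n)) (j a : Fin n)
    (hj : j ∉ l₁) (ha1 : a ∉ l₁) (ha2 : a ∉ l₂) (haj : a ≠ j) :
    comp p (l₁ ++ j :: (l₂ ++ a :: l₃)) j ≤ comp p (l₁ ++ j :: (l₂ ++ a :: l₃)) a := by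
  have h1 := comp_eq p l₁ (l₂ ++ a :: l₃) j hj
  have hrw : l₁ ++ j :: (l₂ ++ a :: l₃) = (l₁ ++ j :: l₂) ++ a :: l₃ := by simp
  have ha : a ∉ l₁ ++ j :: l₂ := by simp [ha1, ha2, haj]
  have h2 := comp_eq p (l₁ ++ j :: l₂) l₃ a ha
  rw [h1, hrw, h2]
  simp only [List.map_append, List.sum_append, List.map_cons, List.sum_cons]
  omega

/-- for all `X ⊆ H` and `κ ∈ J[α,β]`, the maximum of
`C_j^{σ_{X,∅}} - d_j` over `j ∈ J[α,κ-1]` equals the maximum over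
`j ∈ J[α,κ-1] \ X`. -/
theorem stmt12 {n : ℕ} (p : Fin n → ℕ) (hp : ∀ j, 0 < p j)
    (d : Fin n → ℤ) (hd : Monotone d)
    (Jr : Finset (Fin n)) (hJr : Jr.Nonempty)
    (X : Finset (Fin n)) (hX : X ⊆ Hset Jr hJr)
    (κ : Fin n) (hκβ : κ ≤ Jr.max' hJr)
    (h1 : (Finset.Ico (Jr.min' hJr) κ).Nonempty)
    (h2 : ((Finset.Ico (Jr.min' hJr) κ) \ X).Nonempty) :
    (Finset.Ico (Jr.min' hJr) κ).sup' h1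
        (fun j => (comp p (fiveBlock Jr hJr X ∅) j : ℤ) - d j) =
      ((Finset.Ico (Jr.min' hJr) κ) \ X).sup' h2
        (fun j => (comp p (fiveBlock Jr hJr X ∅) j : ℤ) - d j) := by
  set α := Jr.min' hJr with hα
  set β := Jr.max' hJr with hβ
  set S3 := (Finset.Icc α β) \ (X ∪ (∅ : Finset (Fin n))) with hS3
  -- basic facts
  have hαJr : α ∈ Jr := Jr.min'_mem hJr
  have hαβ : α ≤ β := Jr.min'_le _ (Jr.max'_mem hJr)
  have hαX : α ∉ X := fun h => (Finset.mem_sdiff.mp (hX h)).2 hαJr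
  have hακ : α < κ := by
    obtain ⟨x, hx⟩ := h1
    have := Finset.mem_Ico.mp hx
    exact lt_of_le_of_lt this.1 this.2
  have hαS3 : α ∈ S3 := by
    simp only [hS3, Finset.mem_sdiff, Finset.mem_Icc, Finset.union_empty]
    exact ⟨⟨le_refl _, hαβ⟩, hαX⟩
  have hαmem : α ∈ (Finset.Ico α κ) \ X :=
    Finset.mem_sdiff.mpr ⟨Finset.mem_Ico.mpr ⟨le_refl _, hακ⟩, hαX⟩
  apply le_antisymm
  · apply Finset.sup'_le
    intro j hj
    by_cases hjX : j ∈ X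
    · -- j in X: comp j ≤ comp α and d α ≤ d j
      have hjIcc : j ∈ Finset.Icc α β := (Finset.mem_sdiff.mp (hX hjX)).1
      have hαj : α ≤ j := (Finset.mem_Icc.mp hjIcc).1
      -- decompose sortF X around j
      have hjmem : j ∈ sortF X := by
        rw [sortF, Finset.mem_sort]; exact hjX
      obtain ⟨a, b, hab⟩ := List.append_of_mem hjmem
      have hndX : (a ++ j :: b).Nodup := by
        rw [← hab]; exact Finset.sort_nodup _ _
      have hja : j ∉ a := by
        intro h
        exact (List.disjoint_of_nodup_append hndX) h List.mem_cons_self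
      -- decompose sortF S3 around α
      have hαmem' : α ∈ sortF S3 := by
        rw [sortF, Finset.mem_sort]; exact hαS3
      obtain ⟨c, e, hce⟩ := List.append_of_mem hαmem'
      have hndS : (c ++ α :: e).Nodup := by
        rw [← hce]; exact Finset.sort_nodup _ _
      have hαc : α ∉ c := by
        intro h
        exact (List.disjoint_of_nodup_append hndS) h List.mem_cons_self
      -- rewrite the fiveBlock list
      set L1 := sortF (Finset.Iio α) with hL1
      set L5 := sortF (Finset.Ioi β) with hL5
      have heq : fiveBlock Jr hJr X ∅ =
          (L1 ++ a) ++ j :: ((b ++ c) ++ α :: (e ++ L5)) := by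
        show (L1 ++ sortF X ++ sortF S3 ++ sortF ∅ ++ L5 : List (Fin n)) = _
        rw [hab, hce]
        simp [sortF]
      -- memberships for comp_le
      have hsubX : ∀ x ∈ a ++ j :: b, x ∈ X := by
        intro x hx
        rw [← hab] at hx
        rwa [sortF, Finset.mem_sort] at hx
      have hjL1 : j ∉ L1 := by
        rw [hL1, sortF, Finset.mem_sort, Finset.mem_Iio]
        exact not_lt.mpr hαj
      have hαL1 : α ∉ L1 := by
        rw [hL1, sortF, Finset.mem_sort, Finset.mem_Iio]
        exact lt_irrefl _
      have hαa : α ∉ a := fun h => hαX (hsubX _ (List.mem_append_left _ h))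
      have hαb : α ∉ b := fun h => hαX (hsubX _ (by simp [h]))
      have hαnej : α ≠ j := fun h => hαX (h ▸ hjX)
      have hle := comp_le p (L1 ++ a) ((b ++ c)) (e ++ L5) j α
        (by simp [hjL1, hja]) (by simp [hαL1, hαa]) (by simp [hαb, hαc]) hαnej
      rw [← heq] at hle
      have hdle : d α ≤ d j := hd hαj
      calc (comp p (fiveBlock Jr hJr X ∅) j : ℤ) - d j
          ≤ (comp p (fiveBlock Jr hJr X ∅) α : ℤ) - d α := by
            have : (comp p (fiveBlock Jr hJr X ∅) j : ℤ) ≤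
                (comp p (fiveBlock Jr hJr X ∅) α : ℤ) := by exact_mod_cast hle
            omega
        _ ≤ _ := Finset.le_sup' (fun j => (comp p (fiveBlock Jr hJr X ∅) j : ℤ) - d j) hαmem
    · exact Finset.le_sup' (fun j => (comp p (fiveBlock Jr hJr X ∅) j : ℤ) - d j) (Finset.mem_sdiff.mpr ⟨hj, hjX⟩)
  · apply Finset.sup'_le
    intro j hj
    exact Finset.le_sup' (fun j => (comp p (fiveBlock Jr hJr X ∅) j : ℤ) - d j) (Finset.mem_sdiff.mp hj).1
end
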